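/- arXiv:2304.08864 — 12 statements merged into one kernel-verified Lean document; each statement's English description precedes it below -/
import Mathlib

section
/- The LIKE mechanism is strategy-proof: for every agent i, every fixed profile of bid sets of the other agents, and every possible bid set S ⊆ {1,…,m} that agent i could report, agent i's expected utility under the LIKE mechanism when bidding truthfully (i.e., bidding for item F_k iff u_i(F_k) > 0) is at least her expected utility when reporting S. Concretely, writing B_k^{-i} for the set of other agents bidding for item F_k, ∑_{k : u_i(F_k)>0} u_i(F_k)/(|B_k^{-i}|+1) ≥ ∑_{k ∈ S} u_i(F_k)/(|B_k^{-i}|+1). -/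
open Finset

attribute [local instance] Classical.propDecidable

/-- **The LIKE mechanism is strategy-proof.**
There are `n` agents and `m` items.  Agent `i` has nonnegative utilities `u k` for the
items.  For each item `k`, `Bminus k` is the (fixed) set of *other* agents bidding for
item `k` (so `i ∉ Bminus k`).  Under the LIKE mechanism an item is allocated uniformly
at random among its bidders, so if agent `i` bids for item `k` she receives it with
probability `1 / (|Bminus k| + 1)`.  For every bid set `S ⊆ {1,…,m}` that agent `i`
could report, her expected utility when bidding truthfully (bidding for item `k` iff
`u k > 0`) is at least her expected utility when reporting `S`:
`∑_{k : u k > 0} u k / (|B_k^{-i}| + 1) ≥ ∑_{k ∈ S} u k / (|B_k^{-i}| + 1)`. -/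
theorem like_strategyproof (n m : ℕ) (i : Fin n) (Bminus : Fin m → Finset (Fin n))
    (hi : ∀ k, i ∉ Bminus k) (u : Fin m → ℝ) (hu : ∀ k, 0 ≤ u k) (S : Finset (Fin m)) :
    ∑ k ∈ Finset.univ.filter (fun k => 0 < u k), u k / ((Bminus k).card + 1) ≥
      ∑ k ∈ S, u k / ((Bminus k).card + 1) := by
  have h1 : ∑ k ∈ S, u k / ((Bminus k).card + 1)
      = ∑ k ∈ S.filter (fun k => 0 < u k), u k / ((Bminus k).card + 1) := by
    rw [Finset.sum_filter_of_ne]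
    intro k _ h
    rcases (hu k).lt_or_eq with h' | h'
    · exact h'
    · exact absurd (by rw [← h', zero_div]) h
  rw [h1]
  apply Finset.sum_le_sum_of_subset_of_nonneg
  · exact Finset.filter_subset_filter _ (Finset.subset_univ S)
  · intro k _ _
    exact div_nonneg (hu k) (by positivity)
end

section
/- The Weighted LIKE mechanism is strategy-proof even with general utilities: for every agent i, every fixed profile of bid sets of the other agents, and every possible bid set S ⊆ {1,…,m} that agent i could report, agent i's expected utility under the Weighted LIKE mechanism when bidding truthfully (bidding for F_k iff u_i(F_k) > 0) is at least her expected utility when reporting S. Concretely, writing W_k = ∑_{j ∈ B_k^{-i}} w_j for the total weight of the other agents bidding for F_k, ∑_{k : u_i(F_k)>0} u_i(F_k)·w_i/(w_i + W_k) ≥ ∑_{k ∈ S} u_i(F_k)·w_i/(w_i + W_k). -/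
open Finset

attribute [local instance] Classical.propDecidable

/-- **The Weighted LIKE mechanism is strategy-proof even with general utilities.**
There are `n` agents with positive weights `w` and `m` items.  Agent `i` has
nonnegative utilities `u k`.  For each item `k`, `Bminus k` is the (fixed) set of
*other* agents bidding for item `k` (so `i ∉ Bminus k`), with total weight
`W_k = ∑_{j ∈ Bminus k} w j`.  Under the Weighted LIKE mechanism, if agent `i` bids
for item `k` she receives it with probability `w i / (w i + W_k)`.  For every bid set
`S ⊆ {1,…,m}` that agent `i` could report, her expected utility when bidding
truthfully (bidding for item `k` iff `u k > 0`) is at least her expected utility when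
reporting `S`:
`∑_{k : u k > 0} u k · w i/(w i + W_k) ≥ ∑_{k ∈ S} u k · w i/(w i + W_k)`. -/
theorem weightedLike_strategyproof (n m : ℕ) (i : Fin n) (w : Fin n → ℝ)
    (hw : ∀ j, 0 < w j) (Bminus : Fin m → Finset (Fin n)) (hi : ∀ k, i ∉ Bminus k)
    (u : Fin m → ℝ) (hu : ∀ k, 0 ≤ u k) (S : Finset (Fin m)) :
    ∑ k ∈ Finset.univ.filter (fun k => 0 < u k),
        u k * w i / (w i + ∑ j ∈ Bminus k, w j) ≥
      ∑ k ∈ S, u k * w i / (w i + ∑ j ∈ Bminus k, w j) := by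
  have hterm : ∀ k, 0 ≤ u k * w i / (w i + ∑ j ∈ Bminus k, w j) := by
    intro k
    apply div_nonneg (mul_nonneg (hu k) (hw i).le)
    exact add_nonneg (hw i).le (Finset.sum_nonneg fun j _ => (hw j).le)
  calc ∑ k ∈ S, u k * w i / (w i + ∑ j ∈ Bminus k, w j)
      = ∑ k ∈ S.filter (fun k => 0 < u k), u k * w i / (w i + ∑ j ∈ Bminus k, w j) := by
        rw [Finset.sum_filter_of_ne]
        intro k _ h
        rcases (hu k).lt_or_eq with h'|h'
        · exact h'
        · simp [← h'] at h
    _ ≤ ∑ k ∈ Finset.univ.filter (fun k => 0 < u k),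
          u k * w i / (w i + ∑ j ∈ Bminus k, w j) :=
        Finset.sum_le_sum_of_subset_of_nonneg
          (Finset.filter_subset_filter _ (Finset.subset_univ S))
          (fun k _ _ => hterm k)
end

section
/- The Balanced LIKE mechanism is strategy-proof for two agents with 0/1 utilities: with n = 2 agents whose utilities satisfy u_i(F_k) ∈ {0,1}, for any fixed bid sets of agent 2 and any bid sets S_1,…,S_m ⊆ {1} that agent 1 could report, agent 1's expected total utility in the Balanced LIKE process when bidding truthfully (bidding for F_k iff u_1(F_k) = 1) is at least her expected total utility when reporting the alternative bids, where in both cases utility is evaluated with respect to agent 1's true utilities u_1. -/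
open Finset

attribute [local instance] Classical.propDecidable

noncomputable section

/-- Number of items agent `j` has received in rounds strictly before round `k`
under the outcome `a` (where `a k = some j` means item `k` went to agent `j`). -/
def countBefore {n m : ℕ} (a : Fin m → Option (Fin n)) (j : Fin n) (k : Fin m) : ℕ :=
  (Finset.univ.filter fun k' : Fin m => k' < k ∧ a k' = some j).card

/-- The set of agents feasible for item `k` under the Weighted Balanced LIKE mechanism:
those bidders minimizing (count so far)/weight.  (With all weights equal to 1 this is the
Balanced LIKE mechanism.) -/
def minSet {n m : ℕ} (w : Fin n → ℝ) (B : Fin m → Finset (Fin n))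
    (a : Fin m → Option (Fin n)) (k : Fin m) : Finset (Fin n) :=
  (B k).filter fun j => ∀ l ∈ B k,
    (countBefore a j k : ℝ) / w j ≤ (countBefore a l k : ℝ) / w l

/-- Conditional probability of the allocation decision `a k` made at round `k`,
given the history encoded in `a`. -/
def stepProb {n m : ℕ} (w : Fin n → ℝ) (B : Fin m → Finset (Fin n))
    (a : Fin m → Option (Fin n)) (k : Fin m) : ℝ :=
  if B k = ∅ then (if a k = none then 1 else 0)
  else
    match a k with
    | none => 0
    | some j => if j ∈ minSet w B a k then 1 / (minSet w B a k).card else 0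

/-- Probability of the full outcome `a` under the Weighted Balanced LIKE process. -/
def outcomeProb {n m : ℕ} (w : Fin n → ℝ) (B : Fin m → Finset (Fin n))
    (a : Fin m → Option (Fin n)) : ℝ :=
  ∏ k, stepProb w B a k

/-- Realized utility, w.r.t. the utility function `u`, of agent `j`'s bundle in outcome `a`. -/
def realizedUtil {n m : ℕ} (u : Fin m → ℝ) (a : Fin m → Option (Fin n)) (j : Fin n) : ℝ :=
  ∑ k, if a k = some j then u k else 0

/-- Expected utility, w.r.t. the utility function `u`, of agent `j`'s (random) bundle
under the Weighted Balanced LIKE process. -/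
def expUtil {n m : ℕ} (w : Fin n → ℝ) (B : Fin m → Finset (Fin n))
    (u : Fin m → ℝ) (j : Fin n) : ℝ :=
  ∑ a : Fin m → Option (Fin n), outcomeProb w B a * realizedUtil u a j

/-- Build round-wise bid sets from per-agent bid sets `s` (agent `j` bids on the items
in `s j`). -/
def mkBids {n m : ℕ} (s : Fin n → Finset (Fin m)) : Fin m → Finset (Fin n) :=
  fun k => Finset.univ.filter fun j => k ∈ s j


/-! ### Generalized process with initial counts -/

def gMinSet {m : ℕ} (c : Fin 2 → ℕ) (B : Fin m → Finset (Fin 2))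
    (a : Fin m → Option (Fin 2)) (k : Fin m) : Finset (Fin 2) :=
  (B k).filter fun j => ∀ l ∈ B k,
    c j + countBefore a j k ≤ c l + countBefore a l k

def gStep {m : ℕ} (c : Fin 2 → ℕ) (B : Fin m → Finset (Fin 2))
    (a : Fin m → Option (Fin 2)) (k : Fin m) : ℝ :=
  if B k = ∅ then (if a k = none then 1 else 0)
  else
    match a k with
    | none => 0
    | some j => if j ∈ gMinSet c B a k then 1 / (gMinSet c B a k).card else 0

def gOutcome {m : ℕ} (c : Fin 2 → ℕ) (B : Fin m → Finset (Fin 2))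
    (a : Fin m → Option (Fin 2)) : ℝ :=
  ∏ k, gStep c B a k

def gExp {m : ℕ} (c : Fin 2 → ℕ) (B : Fin m → Finset (Fin 2))
    (u : Fin m → ℝ) : ℝ :=
  ∑ a : Fin m → Option (Fin 2), gOutcome c B a * realizedUtil u a 0

lemma minSet_one {m : ℕ} (B : Fin m → Finset (Fin 2)) (a : Fin m → Option (Fin 2)) (k : Fin m) :
    minSet (fun _ => (1:ℝ)) B a k = gMinSet (fun _ => 0) B a k := by
  unfold minSet gMinSet
  apply Finset.filter_congr
  intro j _
  simp [div_one, Nat.cast_le]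

lemma stepProb_one {m : ℕ} (B : Fin m → Finset (Fin 2)) (a : Fin m → Option (Fin 2)) (k : Fin m) :
    stepProb (fun _ => (1:ℝ)) B a k = gStep (fun _ => 0) B a k := by
  unfold stepProb gStep
  rw [minSet_one]
  rcases a k with _ | j
  · rfl
  · exact if_congr Iff.rfl (if_congr Iff.rfl rfl rfl) rfl

lemma expUtil_eq_gExp {m : ℕ} (B : Fin m → Finset (Fin 2)) (u : Fin m → ℝ) :
    expUtil (fun _ => (1:ℝ)) B u 0 = gExp (fun _ => 0) B u := by
  unfold expUtil gExp outcomeProb gOutcome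
  refine Finset.sum_congr rfl fun a _ => ?_
  congr 1
  exact Finset.prod_congr rfl fun k _ => stepProb_one B a k

/-! ### cons decomposition lemmas -/

lemma countBefore_zero {m : ℕ} (a : Fin (m+1) → Option (Fin 2)) (j : Fin 2) :
    countBefore a j 0 = 0 := by
  unfold countBefore
  rw [Finset.card_eq_zero, Finset.filter_eq_empty_iff]
  intro k _
  simp [Fin.not_lt_zero]

def inc (a0 : Option (Fin 2)) (j : Fin 2) : ℕ := if a0 = some j then 1 else 0

lemma countBefore_cons_succ {m : ℕ} (a0 : Option (Fin 2)) (a' : Fin m → Option (Fin 2))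
    (j : Fin 2) (k : Fin m) :
    countBefore (Fin.cons a0 a') j k.succ = inc a0 j + countBefore a' j k := by
  unfold countBefore inc
  rw [Finset.card_filter, Finset.card_filter, Fin.sum_univ_succ]
  congr 1
  · simp [Fin.succ_pos]
  · refine Finset.sum_congr rfl fun i _ => ?_
    simp [Fin.succ_lt_succ_iff, Fin.cons_succ]

lemma gMinSet_cons_succ {m : ℕ} (c : Fin 2 → ℕ) (B : Fin (m+1) → Finset (Fin 2))
    (a0 : Option (Fin 2)) (a' : Fin m → Option (Fin 2)) (k : Fin m) :
    gMinSet c B (Fin.cons a0 a') k.succ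
      = gMinSet (fun j => c j + inc a0 j) (fun k => B k.succ) a' k := by
  unfold gMinSet
  apply Finset.filter_congr
  intro j _
  simp only [countBefore_cons_succ]
  constructor <;> intro h l hl <;> have := h l hl <;> omega

lemma gStep_cons_succ {m : ℕ} (c : Fin 2 → ℕ) (B : Fin (m+1) → Finset (Fin 2))
    (a0 : Option (Fin 2)) (a' : Fin m → Option (Fin 2)) (k : Fin m) :
    gStep c B (Fin.cons a0 a') k.succ
      = gStep (fun j => c j + inc a0 j) (fun k => B k.succ) a' k := by
  unfold gStep
  rw [gMinSet_cons_succ]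
  simp only [Fin.cons_succ]

lemma gMinSet_zero {m : ℕ} (c : Fin 2 → ℕ) (B : Fin (m+1) → Finset (Fin 2))
    (a : Fin (m+1) → Option (Fin 2)) :
    gMinSet c B a 0 = (B 0).filter fun j => ∀ l ∈ B 0, c j ≤ c l := by
  unfold gMinSet
  apply Finset.filter_congr
  intro j _
  simp [countBefore_zero]

lemma realizedUtil_cons {m : ℕ} (u : Fin (m+1) → ℝ) (a0 : Option (Fin 2))
    (a' : Fin m → Option (Fin 2)) :
    realizedUtil u (Fin.cons a0 a') (0 : Fin 2)
      = (if a0 = some 0 then u 0 else 0) + realizedUtil (fun k => u k.succ) a' 0 := by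
  unfold realizedUtil
  rw [Fin.sum_univ_succ]
  simp [Fin.cons_succ]

lemma gOutcome_cons {m : ℕ} (c : Fin 2 → ℕ) (B : Fin (m+1) → Finset (Fin 2))
    (a0 : Option (Fin 2)) (a' : Fin m → Option (Fin 2)) :
    gOutcome c B (Fin.cons a0 a')
      = gStep c B (Fin.cons a0 a') 0
        * gOutcome (fun j => c j + inc a0 j) (fun k => B k.succ) a' := by
  unfold gOutcome
  rw [Fin.prod_univ_succ]
  congr 1
  exact Finset.prod_congr rfl fun k _ => gStep_cons_succ c B a0 a' k

lemma sum_cons_decomp {m : ℕ} (f : (Fin (m+1) → Option (Fin 2)) → ℝ) :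
    ∑ a : Fin (m+1) → Option (Fin 2), f a
      = ∑ a0 : Option (Fin 2), ∑ a' : Fin m → Option (Fin 2), f (Fin.cons a0 a') := by
  rw [← (Fin.consEquiv (fun _ => Option (Fin 2))).sum_comp f, Fintype.sum_prod_type]
  rfl

/-! ### round-0 step probability -/

def s0 (c : Fin 2 → ℕ) (B0 : Finset (Fin 2)) (a0 : Option (Fin 2)) : ℝ :=
  if B0 = ∅ then (if a0 = none then 1 else 0)
  else
    match a0 with
    | none => 0
    | some j => if j ∈ (B0.filter fun j => ∀ l ∈ B0, c j ≤ c l)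
        then 1 / ((B0.filter fun j => ∀ l ∈ B0, c j ≤ c l)).card else 0

lemma gStep_zero {m : ℕ} (c : Fin 2 → ℕ) (B : Fin (m+1) → Finset (Fin 2))
    (a : Fin (m+1) → Option (Fin 2)) :
    gStep c B a 0 = s0 c (B 0) (a 0) := by
  unfold gStep s0
  rw [gMinSet_zero]

lemma s0_sum (c : Fin 2 → ℕ) (B0 : Finset (Fin 2)) :
    ∑ a0 : Option (Fin 2), s0 c B0 a0 = 1 := by
  unfold s0
  by_cases hB : B0 = ∅
  · simp [hB]
  · simp only [if_neg hB]
    rw [Fintype.sum_option]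
    set M := B0.filter fun j => ∀ l ∈ B0, c j ≤ c l with hM
    have hMne : M.Nonempty := by
      obtain ⟨x, hx, hmin⟩ := Finset.exists_min_image B0 c (Finset.nonempty_iff_ne_empty.2 hB)
      exact ⟨x, Finset.mem_filter.2 ⟨hx, hmin⟩⟩
    have hcard : (0:ℝ) < M.card := by
      exact_mod_cast Finset.card_pos.2 hMne
    have : ∑ j : Fin 2, (if j ∈ M then (1:ℝ) / M.card else 0) = ∑ j ∈ M, (1:ℝ)/M.card := by
      rw [Finset.sum_ite_mem, Finset.univ_inter]
    rw [this, Finset.sum_const, nsmul_eq_mul]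
    field_simp
    norm_num

lemma gOutcome_sum {m : ℕ} (c : Fin 2 → ℕ) (B : Fin m → Finset (Fin 2)) :
    ∑ a : Fin m → Option (Fin 2), gOutcome c B a = 1 := by
  induction m generalizing c with
  | zero => simp [gOutcome]
  | succ m ih =>
    rw [sum_cons_decomp]
    have : ∀ a0 : Option (Fin 2), ∑ a' : Fin m → Option (Fin 2),
        gOutcome c B (Fin.cons a0 a') = s0 c (B 0) a0 := by
      intro a0
      calc ∑ a' : Fin m → Option (Fin 2), gOutcome c B (Fin.cons a0 a')
          = ∑ a' : Fin m → Option (Fin 2), s0 c (B 0) a0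
              * gOutcome (fun j => c j + inc a0 j) (fun k => B k.succ) a' := by
            refine Finset.sum_congr rfl fun a' _ => ?_
            rw [gOutcome_cons, gStep_zero]
            simp
        _ = s0 c (B 0) a0 := by rw [← Finset.mul_sum, ih, mul_one]
    simp only [this]
    exact s0_sum c (B 0)

/-! ### the dynamic program -/

def V : (m : ℕ) → (Fin m → Finset (Fin 2)) → (Fin m → ℝ) → ℤ → ℝ
  | 0, _, _, _ => 0
  | m+1, B, u, d =>
    if B 0 = ∅ then V m (fun k => B k.succ) (fun k => u k.succ) d
    else if B 0 = {0} then u 0 + V m (fun k => B k.succ) (fun k => u k.succ) (d+1)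
    else if B 0 = {1} then V m (fun k => B k.succ) (fun k => u k.succ) (d-1)
    else if d < 0 then u 0 + V m (fun k => B k.succ) (fun k => u k.succ) (d+1)
    else if 0 < d then V m (fun k => B k.succ) (fun k => u k.succ) (d-1)
    else (u 0 + V m (fun k => B k.succ) (fun k => u k.succ) (d+1)
          + V m (fun k => B k.succ) (fun k => u k.succ) (d-1)) / 2

lemma finset_fin2_cases (S : Finset (Fin 2)) :
    S = ∅ ∨ S = {0} ∨ S = {1} ∨ S = Finset.univ := by
  revert S; decide

lemma filter_min_univ (c : Fin 2 → ℕ) :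
    ((Finset.univ : Finset (Fin 2)).filter fun j => ∀ l ∈ Finset.univ, c j ≤ c l)
      = if c 0 < c 1 then {0} else if c 1 < c 0 then {1} else Finset.univ := by
  ext j
  simp only [Finset.mem_filter, Finset.mem_univ, true_and, Fin.forall_fin_two]
  split_ifs with h1 h2 <;> fin_cases j <;> simp <;> omega

lemma filter_min_single (c : Fin 2 → ℕ) (j : Fin 2) :
    (({j} : Finset (Fin 2)).filter fun i => ∀ l ∈ ({j} : Finset (Fin 2)), c i ≤ c l)
      = {j} := by
  ext i
  simp only [Finset.mem_filter, Finset.mem_singleton]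
  constructor
  · exact fun h => h.1
  · rintro rfl; exact ⟨rfl, by simp⟩

/-! ### correctness -/

lemma gExp_eq_V {m : ℕ} (c : Fin 2 → ℕ) (B : Fin m → Finset (Fin 2)) (u : Fin m → ℝ) :
    gExp c B u = V m B u ((c 0 : ℤ) - c 1) := by
  induction m generalizing c with
  | zero => simp [gExp, realizedUtil, V]
  | succ m ih =>
    set B' : Fin m → Finset (Fin 2) := fun k => B k.succ with hB'
    set u' : Fin m → ℝ := fun k => u k.succ with hu'
    have key : gExp c B u = ∑ a0 : Option (Fin 2), s0 c (B 0) a0 *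
        ((if a0 = some 0 then u 0 else 0)
          + V m B' u' (((c 0 + inc a0 0 : ℕ) : ℤ) - (c 1 + inc a0 1 : ℕ))) := by
      unfold gExp
      rw [sum_cons_decomp]
      refine Finset.sum_congr rfl fun a0 _ => ?_
      calc ∑ a' : Fin m → Option (Fin 2), gOutcome c B (Fin.cons a0 a') *
              realizedUtil u (Fin.cons a0 a') 0
          = ∑ a' : Fin m → Option (Fin 2), s0 c (B 0) a0 *
              (gOutcome (fun j => c j + inc a0 j) B' a' *
                ((if a0 = some 0 then u 0 else 0) + realizedUtil u' a' 0)) := by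
            refine Finset.sum_congr rfl fun a' _ => ?_
            rw [gOutcome_cons, gStep_zero, realizedUtil_cons]
            simp only [Fin.cons_zero]
            ring
        _ = s0 c (B 0) a0 * ((if a0 = some 0 then u 0 else 0) *
              (∑ a' : Fin m → Option (Fin 2), gOutcome (fun j => c j + inc a0 j) B' a')
              + gExp (fun j => c j + inc a0 j) B' u') := by
            rw [← Finset.mul_sum]
            congr 1
            unfold gExp
            rw [Finset.mul_sum, ← Finset.sum_add_distrib]
            refine Finset.sum_congr rfl fun a' _ => ?_
            ring
        _ = s0 c (B 0) a0 * ((if a0 = some 0 then u 0 else 0)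
              + V m B' u' (((c 0 + inc a0 0 : ℕ) : ℤ) - (c 1 + inc a0 1 : ℕ))) := by
            rw [gOutcome_sum, ih]
            ring_nf
    rw [key, Fintype.sum_option, Fin.sum_univ_two]
    set d : ℤ := (c 0 : ℤ) - c 1 with hd
    have e0 : (((c 0 + inc none 0 : ℕ) : ℤ) - (c 1 + inc none 1 : ℕ)) = d := by
      simp [inc, hd]
    have e1 : (((c 0 + inc (some 0) 0 : ℕ) : ℤ) - (c 1 + inc (some 0) 1 : ℕ)) = d + 1 := by
      simp [inc, hd]; ring
    have e2 : (((c 0 + inc (some 1) 0 : ℕ) : ℤ) - (c 1 + inc (some 1) 1 : ℕ)) = d - 1 := by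
      simp [inc, hd]; ring
    rw [e0, e1, e2]
    rcases finset_fin2_cases (B 0) with hB0 | hB0 | hB0 | hB0 <;>
      simp only [s0, hB0, V, filter_min_single, filter_min_univ]
    · simp
      rfl
    · have : ({0} : Finset (Fin 2)) ≠ ∅ := by decide
      simp [this]
      rfl
    · have h1 : ({1} : Finset (Fin 2)) ≠ ∅ := by decide
      have h2 : ({1} : Finset (Fin 2)) ≠ {0} := by decide
      simp [h1, h2]
      rfl
    · have h1 : (Finset.univ : Finset (Fin 2)) ≠ ∅ := by decide
      have h2 : (Finset.univ : Finset (Fin 2)) ≠ {0} := by decide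
      have h3 : (Finset.univ : Finset (Fin 2)) ≠ {1} := by decide
      simp only [if_neg h1, if_neg h2, if_neg h3]
      rcases lt_trichotomy (c 0) (c 1) with hc | hc | hc
      · have hd0 : d < 0 := by omega
        simp [hc, hd0, not_lt.2 hc.le]
        rfl
      · have hd0 : ¬ d < 0 ∧ ¬ 0 < d := by omega
        simp [hc, lt_irrefl, hd0.1, hd0.2]
        simp only [← hB', ← hu']
        ring
      · have hne : ¬ c 0 < c 1 := by omega
        have hd0 : ¬ d < 0 := by omega
        have hd1 : 0 < d := by omega
        rw [if_neg hne, if_pos hc, if_neg hd0, if_pos hd1]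
        simp only [← hB', ← hu']
        simp

/-! ### unfolding lemmas for V -/

lemma V_succ_empty {m : ℕ} {B : Fin (m+1) → Finset (Fin 2)} {u : Fin (m+1) → ℝ}
    (h : B 0 = ∅) (d : ℤ) :
    V (m+1) B u d = V m (fun k => B k.succ) (fun k => u k.succ) d := by
  simp [V, h]

lemma V_succ_zero {m : ℕ} {B : Fin (m+1) → Finset (Fin 2)} {u : Fin (m+1) → ℝ}
    (h : B 0 = {0}) (d : ℤ) :
    V (m+1) B u d = u 0 + V m (fun k => B k.succ) (fun k => u k.succ) (d+1) := by
  simp [V, h]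

lemma V_succ_one {m : ℕ} {B : Fin (m+1) → Finset (Fin 2)} {u : Fin (m+1) → ℝ}
    (h : B 0 = {1}) (d : ℤ) :
    V (m+1) B u d = V m (fun k => B k.succ) (fun k => u k.succ) (d-1) := by
  simp [V, h]

lemma V_succ_univ {m : ℕ} {B : Fin (m+1) → Finset (Fin 2)} {u : Fin (m+1) → ℝ}
    (h : B 0 = Finset.univ) (d : ℤ) :
    V (m+1) B u d =
      if d < 0 then u 0 + V m (fun k => B k.succ) (fun k => u k.succ) (d+1)
      else if 0 < d then V m (fun k => B k.succ) (fun k => u k.succ) (d-1)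
      else (u 0 + V m (fun k => B k.succ) (fun k => u k.succ) (d+1)
            + V m (fun k => B k.succ) (fun k => u k.succ) (d-1)) / 2 := by
  simp only [V, h]
  rw [if_neg (by decide : ¬ (univ : Finset (Fin 2)) = ∅),
    if_neg (by decide : ¬ (univ : Finset (Fin 2)) = {0}),
    if_neg (by decide : ¬ (univ : Finset (Fin 2)) = {1})]

lemma mono_of_step (f : ℤ → ℝ) (h : ∀ d, f (d+1) ≤ f d) :
    ∀ d e : ℤ, d ≤ e → f e ≤ f d := by
  intro d e hde
  exact Int.le_induction (motive := fun e _ => f e ≤ f d) (le_refl _) (fun n _ ih => (h n).trans ih) e hde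

/-! ### invariants of the truthful value function -/

lemma V_inv (m : ℕ) (B : Fin m → Finset (Fin 2)) (u : Fin m → ℝ)
    (hu : ∀ k, u k = 0 ∨ u k = 1) (htr : ∀ k, ((0:Fin 2) ∈ B k ↔ u k = 1)) :
    (∀ d e : ℤ, d ≤ e → V m B u e ≤ V m B u d) ∧
    (∀ d : ℤ, V m B u d ≤ V m B u (d+2) + 1) := by
  induction m with
  | zero => exact ⟨fun _ _ _ => le_refl 0, fun _ => by norm_num [V]⟩
  | succ m ih =>
    obtain ⟨mono, lip⟩ := ih (fun k => B k.succ) (fun k => u k.succ)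
      (fun k => hu k.succ) (fun k => htr k.succ)
    have lip1 : ∀ d : ℤ, V m (fun k => B k.succ) (fun k => u k.succ) d
        ≤ V m (fun k => B k.succ) (fun k => u k.succ) (d+1) + 1 := by
      intro d
      have h1 := lip d
      have h2 := mono (d+1) (d+2) (by omega)
      linarith
    rcases finset_fin2_cases (B 0) with hB0 | hB0 | hB0 | hB0
    · constructor
      · intro d e hde
        rw [V_succ_empty hB0, V_succ_empty hB0]
        exact mono d e hde
      · intro d
        rw [V_succ_empty hB0, V_succ_empty hB0]
        exact lip d
    · constructor
      · intro d e hde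
        rw [V_succ_zero hB0, V_succ_zero hB0]
        exact add_le_add_right (mono (d+1) (e+1) (by omega)) _
      · intro d
        rw [V_succ_zero hB0, V_succ_zero hB0]
        have := lip (d+1)
        have := mono (d+2+1) (d+1+2) (by omega)
        linarith
    · constructor
      · intro d e hde
        rw [V_succ_one hB0, V_succ_one hB0]
        exact mono (d-1) (e-1) (by omega)
      · intro d
        rw [V_succ_one hB0, V_succ_one hB0]
        have := lip (d-1)
        have := mono (d+2-1) (d-1+2) (by omega)
        linarith
    · have hu0 : u 0 = 1 := (htr 0).1 (by rw [hB0]; exact Finset.mem_univ _)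
      -- step monotonicity first
      have smono : ∀ d : ℤ, V (m+1) B u (d+1) ≤ V (m+1) B u d := by
        intro d
        rw [V_succ_univ hB0, V_succ_univ hB0, hu0]
        rcases lt_trichotomy d (-1) with h | h | h
        · rw [if_pos (by omega : d + 1 < 0), if_pos (by omega : d < 0)]
          have := mono (d+1) (d+1+1) (by omega)
          linarith
        · subst h
          norm_num
          have h1 := mono 0 1 (by omega)
          have h2 := lip (-1)
          norm_num at h2
          linarith
        · rcases eq_or_lt_of_le (by omega : (0:ℤ) ≤ d) with h0 | h0
          · rw [← h0]
            norm_num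
            have h1 := mono (-1) 0 (by omega)
            have h2 := lip 0
            have h3 := mono 1 2 (by omega)
            norm_num at h2
            linarith
          · rw [if_neg (by omega : ¬ d + 1 < 0), if_pos (by omega : 0 < d + 1),
              if_neg (by omega : ¬ d < 0), if_pos h0]
            exact mono (d-1) (d+1-1) (by omega)
      constructor
      · exact mono_of_step _ smono
      · intro d
        rw [V_succ_univ hB0, V_succ_univ hB0, hu0]
        rcases lt_trichotomy d (-2) with h | h | h
        · rw [if_pos (by omega : d < 0), if_pos (by omega : d + 2 < 0)]
          have h1 := lip (d+1)
          have h2 := mono (d+2+1) (d+1+2) (by omega)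
          linarith
        · subst h
          norm_num
          have h1 := lip (-1)
          norm_num at h1
          linarith
        · rcases lt_trichotomy d (-1) with h' | h' | h'
          · omega
          · subst h'
            norm_num
            linarith []
          · rcases eq_or_lt_of_le (by omega : (0:ℤ) ≤ d) with h0 | h0
            · rw [← h0]
              norm_num
              have h1 := lip (-1)
              norm_num at h1
              linarith
            · rw [if_neg (by omega : ¬ d < 0), if_pos h0,
                if_neg (by omega : ¬ d + 2 < 0), if_pos (by omega : (0:ℤ) < d + 2)]
              have h1 := lip (d-1)
              have h2 := mono (d+2-1) (d-1+2) (by omega)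
              linarith

/-! ### deviation lemma -/

lemma V_dev (m : ℕ) (BT BS : Fin m → Finset (Fin 2)) (u : Fin m → ℝ)
    (hu : ∀ k, u k = 0 ∨ u k = 1)
    (htr : ∀ k, ((0:Fin 2) ∈ BT k ↔ u k = 1))
    (hb1 : ∀ k, (((1:Fin 2) ∈ BS k) ↔ ((1:Fin 2) ∈ BT k))) :
    ∀ d : ℤ, V m BS u d ≤ V m BT u d := by
  induction m with
  | zero => intro d; exact le_refl 0
  | succ m ihm =>
    intro d
    have IH : ∀ d : ℤ, V m (fun k => BS k.succ) (fun k => u k.succ) d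
        ≤ V m (fun k => BT k.succ) (fun k => u k.succ) d :=
      ihm (fun k => BT k.succ) (fun k => BS k.succ) (fun k => u k.succ)
        (fun k => hu k.succ) (fun k => htr k.succ) (fun k => hb1 k.succ)
    obtain ⟨mono, lip⟩ := V_inv m (fun k => BT k.succ) (fun k => u k.succ)
      (fun k => hu k.succ) (fun k => htr k.succ)
    have lip1 : ∀ d : ℤ, V m (fun k => BT k.succ) (fun k => u k.succ) d
        ≤ V m (fun k => BT k.succ) (fun k => u k.succ) (d+1) + 1 := by
      intro d
      have h1 := lip d
      have h2 := mono (d+1) (d+2) (by omega)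
      linarith
    have h10 := hb1 0
    have hu0 := hu 0
    rcases finset_fin2_cases (BT 0) with hT | hT | hT | hT <;>
      rcases finset_fin2_cases (BS 0) with hS | hS | hS | hS <;>
      rw [hT, hS] at h10 <;>
      [skip; skip; exact absurd (h10.1 (by decide)) (by decide);
        exact absurd (h10.1 (by decide)) (by decide); skip; skip;
        exact absurd (h10.1 (by decide)) (by decide);
        exact absurd (h10.1 (by decide)) (by decide);
        exact absurd (h10.2 (by decide)) (by decide);
        exact absurd (h10.2 (by decide)) (by decide); skip; skip;
        exact absurd (h10.2 (by decide)) (by decide);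
        exact absurd (h10.2 (by decide)) (by decide); skip; skip]
    -- (∅, ∅)
    · rw [V_succ_empty hT, V_succ_empty hS]
      exact IH d
    -- (∅, {0}) : u 0 = 0
    · have hu00 : u 0 = 0 := by
        rcases hu0 with h | h
        · exact h
        · exact absurd ((htr 0).2 h) (by rw [hT]; simp)
      rw [V_succ_empty hT, V_succ_zero hS, hu00]
      have := IH (d+1)
      have := mono d (d+1) (by omega)
      linarith
    -- ({0}, ∅) : u 0 = 1
    · have hu01 : u 0 = 1 := (htr 0).1 (by rw [hT]; decide)
      rw [V_succ_zero hT, V_succ_empty hS, hu01]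
      have := IH d
      have := lip1 d
      linarith
    -- ({0}, {0})
    · rw [V_succ_zero hT, V_succ_zero hS]
      have := IH (d+1)
      linarith
    -- ({1}, {1})
    · rw [V_succ_one hT, V_succ_one hS]
      exact IH (d-1)
    -- ({1}, univ) : u 0 = 0
    · have hu00 : u 0 = 0 := by
        rcases hu0 with h | h
        · exact h
        · exact absurd ((htr 0).2 h) (by rw [hT]; decide)
      rw [V_succ_one hT, V_succ_univ hS, hu00]
      split_ifs with h1 h2
      · have := IH (d+1)
        have := mono (d-1) (d+1) (by omega)
        linarith
      · exact IH (d-1)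
      · have hd : d = 0 := by omega
        subst hd
        norm_num
        have := IH 1
        have := IH (-1)
        have h2 := mono (-1) 1 (by omega)
        linarith
    -- (univ, {1}) : u 0 = 1
    · have hu01 : u 0 = 1 := (htr 0).1 (by rw [hT]; decide)
      rw [V_succ_univ hT, V_succ_one hS, hu01]
      split_ifs with h1 h2
      · have h3 := IH (d-1)
        have h4 := lip (d-1)
        have h5 := mono (d+1) (d-1+2) (by omega)
        linarith
      · exact IH (d-1)
      · have hd : d = 0 := by omega
        subst hd
        norm_num
        have h3 := IH (-1)
        have h4 := lip (-1)
        norm_num at h4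
        linarith
    -- (univ, univ)
    · have hu01 : u 0 = 1 := (htr 0).1 (by rw [hT]; decide)
      rw [V_succ_univ hT, V_succ_univ hS]
      split_ifs with h1 h2
      · have := IH (d+1)
        linarith
      · exact IH (d-1)
      · have := IH (d+1)
        have := IH (d-1)
        linarith


/-- **The Balanced LIKE mechanism is strategy-proof for two agents with 0/1 utilities.**
With `n = 2` agents whose utilities satisfy `u i k ∈ {0,1}`, for any fixed bid set `S2`
of agent 2 and any alternative bid set `S1` that agent 1 could report, agent 1's
expected total utility (w.r.t. her true utilities `u 0`) under the Balanced LIKE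
process (the Weighted Balanced LIKE process with all weights `1`) when bidding
truthfully (bidding for item `k` iff `u 0 k > 0`) is at least her expected total
utility when reporting `S1`. -/
theorem balancedLike_strategyproof_two_agents (m : ℕ) (u : Fin 2 → Fin m → ℝ)
    (h01 : ∀ i k, u i k = 0 ∨ u i k = 1) (S2 S1 : Finset (Fin m)) :
    expUtil (fun _ => (1 : ℝ))
        (mkBids ![Finset.univ.filter (fun k => 0 < u 0 k), S2]) (u 0) 0 ≥
      expUtil (fun _ => (1 : ℝ)) (mkBids ![S1, S2]) (u 0) 0 := by
  rw [expUtil_eq_gExp, expUtil_eq_gExp, gExp_eq_V, gExp_eq_V]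
  norm_num
  apply V_dev _ _ _ _ (h01 0)
  · intro k
    simp only [mkBids, Finset.mem_filter, Finset.mem_univ, true_and,
      Matrix.cons_val_zero]
    constructor
    · rintro hk
      rcases h01 0 k with h | h
      · rw [h] at hk; norm_num at hk
      · exact h
    · intro h; rw [h]; norm_num
  · intro k
    simp [mkBids, Matrix.cons_val_one, Matrix.head_cons]

end
end

section
/- The Weighted Balanced LIKE mechanism is strategy-proof for two agents with 0/1 utilities, for arbitrary positive weights: with n = 2 agents having weights w_1, w_2 > 0 and utilities u_i(F_k) ∈ {0,1}, for any fixed bid sets of agent 2 and any alternative bids that agent 1 could report, agent 1's expected total utility (with respect to her true utilities u_1) in the Weighted Balanced LIKE process when bidding truthfully (bidding for F_k iff u_1(F_k) = 1) is at least her expected total utility when reporting the alternative bids. -/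
open Finset

attribute [local instance] Classical.propDecidable

noncomputable section

namespace SPaux


/-- value for agent 0 when both agents behave per the round data
`(t, q, r)` : `t` = agent 0 wants the item, `q` = agent 1 bids, `r` = agent 0 bids. -/
def W (w : Fin 2 → ℝ) : List (Bool × Bool × Bool) → ℕ → ℕ → ℝ
  | [], _, _ => 0
  | (t, true, true) :: L, a, b =>
      if (a : ℝ) / w 0 < (b : ℝ) / w 1 then (if t then 1 else 0) + W w L (a + 1) b
      else if (b : ℝ) / w 1 < (a : ℝ) / w 0 then W w L a (b + 1)
      else ((if t then 1 else 0) + W w L (a + 1) b) / 2 + W w L a (b + 1) / 2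
  | (t, false, true) :: L, a, b => (if t then 1 else 0) + W w L (a + 1) b
  | (_, true, false) :: L, a, b => W w L a (b + 1)
  | (_, false, false) :: L, a, b => W w L a b

/-- value for agent 0 under truthful play; round data `(t, q)`. -/
def V (w : Fin 2 → ℝ) : List (Bool × Bool) → ℕ → ℕ → ℝ
  | [], _, _ => 0
  | (true, true) :: L, a, b =>
      if (a : ℝ) / w 0 < (b : ℝ) / w 1 then 1 + V w L (a + 1) b
      else if (b : ℝ) / w 1 < (a : ℝ) / w 0 then V w L a (b + 1)
      else (1 + V w L (a + 1) b) / 2 + V w L a (b + 1) / 2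
  | (true, false) :: L, a, b => 1 + V w L (a + 1) b
  | (false, true) :: L, a, b => V w L a (b + 1)
  | (false, false) :: L, a, b => V w L a b

variable {w : Fin 2 → ℝ}

lemma ratio_lt (hw : 0 < w 0) (a : ℕ) :
    ((a : ℕ) : ℝ) / w 0 < (((a + 1 : ℕ)) : ℝ) / w 0 := by
  apply div_lt_div_of_pos_right _ hw
  exact_mod_cast Nat.lt_succ_self a

lemma ratio_lt' (hw : 0 < w 1) (b : ℕ) :
    ((b : ℕ) : ℝ) / w 1 < (((b + 1 : ℕ)) : ℝ) / w 1 := by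
  apply div_lt_div_of_pos_right _ hw
  exact_mod_cast Nat.lt_succ_self b

lemma V_lem (hw0 : 0 < w 0) (hw1 : 0 < w 1) :
    ∀ (L : List (Bool × Bool)) (a b : ℕ),
      V w L (a + 1) b ≤ V w L a b ∧
      V w L a b ≤ V w L a (b + 1) ∧
      V w L a b ≤ 1 + V w L (a + 1) b ∧
      V w L a (b + 1) ≤ 1 + V w L (a + 1) b := by
  intro L
  induction L with
  | nil => intro a b; simp [V]
  | cons hd tl ih =>
    obtain ⟨t, q⟩ := hd
    intro a b
    obtain ⟨h1, h2, h3, h5⟩ := ih a b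
    obtain ⟨h1', h2', h3', h5'⟩ := ih (a + 1) b
    obtain ⟨h1'', h2'', h3'', h5''⟩ := ih a (b + 1)
    obtain ⟨h1''', h2''', h3''', h5'''⟩ := ih (a + 1) (b + 1)
    cases t <;> cases q
    · simp only [V]; exact ⟨h1, h2, h3, h5⟩
    · simp only [V]; exact ⟨h1'', h2'', h3'', h5''⟩
    · simp only [V]
      exact ⟨by linarith, by linarith, by linarith, by linarith⟩
    · -- t = true, q = true
      have hx : ((a : ℕ) : ℝ) / w 0 < (((a + 1 : ℕ)) : ℝ) / w 0 := ratio_lt hw0 a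
      have hy : ((b : ℕ) : ℝ) / w 1 < (((b + 1 : ℕ)) : ℝ) / w 1 := ratio_lt' hw1 b
      simp only [V]
      refine ⟨?_, ?_, ?_, ?_⟩
      · -- L1 : head (a+1, b) ≤ head (a, b)
        rcases lt_trichotomy ((((a + 1 : ℕ)) : ℝ) / w 0) (((b : ℕ) : ℝ) / w 1) with h | h | h
        · have hab : ((a : ℕ) : ℝ) / w 0 < ((b : ℕ) : ℝ) / w 1 := hx.trans h
          rw [if_pos h, if_pos hab]
          linarith
        · have hab : ((a : ℕ) : ℝ) / w 0 < ((b : ℕ) : ℝ) / w 1 := hx.trans_le h.le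
          rw [if_neg (not_lt.mpr h.ge), if_neg (not_lt.mpr h.le), if_pos hab]
          linarith
        · rw [if_neg (asymm h), if_pos h]
          rcases lt_trichotomy (((a : ℕ) : ℝ) / w 0) (((b : ℕ) : ℝ) / w 1) with h' | h' | h'
          · rw [if_pos h']
            linarith
          · rw [if_neg (not_lt.mpr h'.le), if_neg (not_lt.mpr h'.ge)]
            linarith
          · rw [if_neg (asymm h'), if_pos h']
            linarith
      · -- L2 : head (a, b) ≤ head (a, b+1)
        rcases lt_trichotomy (((a : ℕ) : ℝ) / w 0) (((b : ℕ) : ℝ) / w 1) with h | h | h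
        · have hab : ((a : ℕ) : ℝ) / w 0 < (((b + 1 : ℕ)) : ℝ) / w 1 := h.trans hy
          rw [if_pos h, if_pos hab]
          linarith
        · have hab : ((a : ℕ) : ℝ) / w 0 < (((b + 1 : ℕ)) : ℝ) / w 1 := h.le.trans_lt hy
          rw [if_neg (not_lt.mpr h.le), if_neg (not_lt.mpr h.ge), if_pos hab]
          linarith
        · rw [if_neg (asymm h), if_pos h]
          rcases lt_trichotomy (((a : ℕ) : ℝ) / w 0) ((((b + 1 : ℕ)) : ℝ) / w 1) with h' | h' | h'
          · rw [if_pos h']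
            linarith
          · rw [if_neg (not_lt.mpr h'.le), if_neg (not_lt.mpr h'.ge)]
            linarith
          · rw [if_neg (asymm h'), if_pos h']
            linarith
      · -- L3 : head (a, b) ≤ 1 + head (a+1, b)
        rcases lt_trichotomy ((((a + 1 : ℕ)) : ℝ) / w 0) (((b : ℕ) : ℝ) / w 1) with h | h | h
        · have hab : ((a : ℕ) : ℝ) / w 0 < ((b : ℕ) : ℝ) / w 1 := hx.trans h
          rw [if_pos h, if_pos hab]
          linarith [(ih (a+1) b).2.2.1]
        · have hab : ((a : ℕ) : ℝ) / w 0 < ((b : ℕ) : ℝ) / w 1 := hx.trans_le h.le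
          rw [if_neg (not_lt.mpr h.ge), if_neg (not_lt.mpr h.le), if_pos hab]
          linarith [(ih (a+1) b).2.2.1, (ih (a+1) b).2.1]
        · rw [if_neg (asymm h), if_pos h]
          rcases lt_trichotomy (((a : ℕ) : ℝ) / w 0) (((b : ℕ) : ℝ) / w 1) with h' | h' | h'
          · rw [if_pos h']
            linarith [(ih (a+1) b).2.1]
          · rw [if_neg (not_lt.mpr h'.le), if_neg (not_lt.mpr h'.ge)]
            linarith [(ih (a+1) b).2.1]
          · rw [if_neg (asymm h'), if_pos h']
            linarith
      · -- L5 : head (a, b+1) ≤ 1 + head (a+1, b)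
        rcases lt_trichotomy ((((a + 1 : ℕ)) : ℝ) / w 0) (((b : ℕ) : ℝ) / w 1) with h | h | h
        · have hab : ((a : ℕ) : ℝ) / w 0 < (((b + 1 : ℕ)) : ℝ) / w 1 := (hx.trans h).trans hy
          rw [if_pos h, if_pos hab]
          linarith
        · have hab : ((a : ℕ) : ℝ) / w 0 < (((b + 1 : ℕ)) : ℝ) / w 1 := (hx.trans_le h.le).trans hy
          rw [if_neg (not_lt.mpr h.ge), if_neg (not_lt.mpr h.le), if_pos hab]
          linarith
        · rw [if_neg (asymm h), if_pos h]
          rcases lt_trichotomy (((a : ℕ) : ℝ) / w 0) ((((b + 1 : ℕ)) : ℝ) / w 1) with h' | h' | h'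
          · rw [if_pos h']
          · rw [if_neg (not_lt.mpr h'.le), if_neg (not_lt.mpr h'.ge)]
            linarith [(ih a (b+1)).2.2.2]
          · rw [if_neg (asymm h'), if_pos h']
            linarith [(ih a (b+1)).2.2.2]

/-- truthful play dominates arbitrary reports. -/
lemma W_le_V (hw0 : 0 < w 0) (hw1 : 0 < w 1) :
    ∀ (L : List (Bool × Bool × Bool)) (a b : ℕ),
      W w L a b ≤ V w (L.map fun p => (p.1, p.2.1)) a b := by
  intro L
  induction L with
  | nil => intro a b; simp [W, V]
  | cons hd tl ih =>
    obtain ⟨t, q, r⟩ := hd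
    intro a b
    have hV := V_lem hw0 hw1 (tl.map fun p => (p.1, p.2.1))
    cases t <;> cases q <;> cases r <;>
      simp only [W, V, List.map_cons, if_true, if_false, Bool.false_eq_true, ite_false, ite_true]
    · exact ih a b
    · -- t=false q=false r=true : overbid, nobody else
      have := (hV a b).1
      linarith [ih (a+1) b]
    · exact ih a (b+1)
    · -- t=false q=true r=true : overbid, opponent bids
      rcases lt_trichotomy (((a : ℕ) : ℝ) / w 0) (((b : ℕ) : ℝ) / w 1) with h | h | h
      · rw [if_pos h]
        have hA := (hV a b).1
        have hB := (hV a b).2.1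
        linarith [ih (a+1) b]
      · rw [if_neg (not_lt.mpr h.le), if_neg (not_lt.mpr h.ge)]
        have hA := (hV a b).1
        have hB := (hV a b).2.1
        linarith [ih (a+1) b, ih a (b+1)]
      · rw [if_neg (asymm h), if_pos h]
        exact ih a (b+1)
    · -- t=true q=false r=false : underbid, nobody else
      have := (hV a b).2.2.1
      linarith [ih a b]
    · -- t=true q=false r=true : truthful
      linarith [ih (a+1) b]
    · -- t=true q=true r=false : underbid, opponent bids
      rcases lt_trichotomy (((a : ℕ) : ℝ) / w 0) (((b : ℕ) : ℝ) / w 1) with h | h | h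
      · rw [if_pos h]
        have := (hV a b).2.2.2
        linarith [ih a (b+1)]
      · rw [if_neg (not_lt.mpr h.le), if_neg (not_lt.mpr h.ge)]
        have := (hV a b).2.2.2
        linarith [ih a (b+1)]
      · rw [if_neg (asymm h), if_pos h]
        exact ih a (b+1)
    · -- t=true q=true r=true : truthful
      rcases lt_trichotomy (((a : ℕ) : ℝ) / w 0) (((b : ℕ) : ℝ) / w 1) with h | h | h
      · rw [if_pos h, if_pos h]
        linarith [ih (a+1) b]
      · rw [if_neg (not_lt.mpr h.le), if_neg (not_lt.mpr h.ge),
            if_neg (not_lt.mpr h.le), if_neg (not_lt.mpr h.ge)]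
        linarith [ih (a+1) b, ih a (b+1)]
      · rw [if_neg (asymm h), if_pos h, if_neg (asymm h), if_pos h]
        exact ih a (b+1)

/-- on truthful lists `W` agrees with `V`. -/
lemma W_truthful (L : List (Bool × Bool × Bool)) (hL : ∀ p ∈ L, p.2.2 = p.1) :
    ∀ a b, W w L a b = V w (L.map fun p => (p.1, p.2.1)) a b := by
  induction L with
  | nil => intro a b; simp [W, V]
  | cons hd tl ih =>
    obtain ⟨t, q, r⟩ := hd
    have hr : r = t := hL (t, q, r) (by simp)
    subst hr
    have ih' := ih fun p hp => hL p (List.mem_cons_of_mem _ hp)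
    intro a b
    cases r <;> cases q <;> simp [W, V, ih']

/-! ### Bridge between the process and the recursive values -/

def minF (w : Fin 2 → ℝ) (off : Fin 2 → ℕ) (Bs : Finset (Fin 2)) : Finset (Fin 2) :=
  Bs.filter fun j => ∀ l ∈ Bs, (off j : ℝ) / w j ≤ (off l : ℝ) / w l

def headP (w : Fin 2 → ℝ) (off : Fin 2 → ℕ) (Bs : Finset (Fin 2)) (x : Option (Fin 2)) : ℝ :=
  if Bs = ∅ then (if x = none then 1 else 0)
  else
    match x with
    | none => 0
    | some j => if j ∈ minF w off Bs then 1 / (minF w off Bs).card else 0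

def stepO {m : ℕ} (w : Fin 2 → ℝ) (off : Fin 2 → ℕ) (B : Fin m → Finset (Fin 2))
    (a : Fin m → Option (Fin 2)) (k : Fin m) : ℝ :=
  headP w (fun j => off j + countBefore a j k) (B k) (a k)

def outO {m : ℕ} (w : Fin 2 → ℝ) (off : Fin 2 → ℕ) (B : Fin m → Finset (Fin 2))
    (a : Fin m → Option (Fin 2)) : ℝ :=
  ∏ k, stepO w off B a k

lemma stepProb_eq {m : ℕ} (w : Fin 2 → ℝ) (B : Fin m → Finset (Fin 2))
    (a : Fin m → Option (Fin 2)) (k : Fin m) :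
    stepProb w B a k = stepO w (fun _ => 0) B a k := by
  unfold stepProb stepO headP minF minSet
  rcases a k with _ | j <;> simp

lemma outcomeProb_eq {m : ℕ} (w : Fin 2 → ℝ) (B : Fin m → Finset (Fin 2))
    (a : Fin m → Option (Fin 2)) :
    outcomeProb w B a = outO w (fun _ => 0) B a :=
  Finset.prod_congr rfl fun k _ => stepProb_eq w B a k

lemma countBefore_zero {m : ℕ} (a : Fin (m + 1) → Option (Fin 2)) (j : Fin 2) :
    countBefore a j 0 = 0 := by
  simp [countBefore, Fin.not_lt_zero]

lemma countBefore_succ {m : ℕ} (x : Option (Fin 2)) (a' : Fin m → Option (Fin 2))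
    (j : Fin 2) (k : Fin m) :
    countBefore (Fin.cons x a') j k.succ
      = (if x = some j then 1 else 0) + countBefore a' j k := by
  unfold countBefore
  rw [Finset.card_filter, Finset.card_filter, Fin.sum_univ_succ]
  simp [Fin.cons_succ, Fin.succ_lt_succ_iff, Fin.succ_pos]

lemma stepO_zero {m : ℕ} (w : Fin 2 → ℝ) (off : Fin 2 → ℕ)
    (B : Fin (m + 1) → Finset (Fin 2)) (x : Option (Fin 2)) (a' : Fin m → Option (Fin 2)) :
    stepO w off B (Fin.cons x a') 0 = headP w off (B 0) x := by
  unfold stepO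
  have h1 : (fun j => off j + countBefore (Fin.cons x a') j 0) = off := by
    funext j; simp [countBefore_zero]
  rw [h1, Fin.cons_zero]

lemma stepO_succ {m : ℕ} (w : Fin 2 → ℝ) (off : Fin 2 → ℕ)
    (B : Fin (m + 1) → Finset (Fin 2)) (x : Option (Fin 2)) (a' : Fin m → Option (Fin 2))
    (k : Fin m) :
    stepO w off B (Fin.cons x a') k.succ
      = stepO w (fun j => off j + if x = some j then 1 else 0) (fun i => B i.succ) a' k := by
  unfold stepO
  have h1 : (fun j => off j + countBefore (Fin.cons x a') j k.succ)
      = fun j => (off j + if x = some j then 1 else 0) + countBefore a' j k := by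
    funext j; rw [countBefore_succ]; omega
  rw [h1, Fin.cons_succ]

lemma outO_cons {m : ℕ} (w : Fin 2 → ℝ) (off : Fin 2 → ℕ)
    (B : Fin (m + 1) → Finset (Fin 2)) (x : Option (Fin 2)) (a' : Fin m → Option (Fin 2)) :
    outO w off B (Fin.cons x a')
      = headP w off (B 0) x
        * outO w (fun j => off j + if x = some j then 1 else 0) (fun i => B i.succ) a' := by
  unfold outO
  rw [Fin.prod_univ_succ, stepO_zero]
  congr 1
  exact Finset.prod_congr rfl fun k _ => stepO_succ w off B x a' k

lemma realizedUtil_cons {m : ℕ} (u : Fin (m + 1) → ℝ) (x : Option (Fin 2))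
    (a' : Fin m → Option (Fin 2)) :
    realizedUtil u (Fin.cons x a') 0
      = (if x = some 0 then u 0 else 0) + realizedUtil (fun i => u i.succ) a' 0 := by
  unfold realizedUtil
  rw [Fin.sum_univ_succ, Fin.cons_zero]
  simp [Fin.cons_succ]

lemma minF_nonempty (w : Fin 2 → ℝ) (off : Fin 2 → ℕ) {Bs : Finset (Fin 2)}
    (hBs : Bs.Nonempty) : (minF w off Bs).Nonempty := by
  obtain ⟨j, hj, hmin⟩ := Finset.exists_min_image Bs (fun j => (off j : ℝ) / w j) hBs
  exact ⟨j, Finset.mem_filter.mpr ⟨hj, hmin⟩⟩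

lemma headP_total (w : Fin 2 → ℝ) (off : Fin 2 → ℕ) (Bs : Finset (Fin 2)) :
    ∑ x : Option (Fin 2), headP w off Bs x = 1 := by
  rcases eq_or_ne Bs ∅ with h | h
  · subst h; rw [Fintype.sum_option]; simp [headP]
  · rw [Fintype.sum_option]
    have hne := minF_nonempty w off (Finset.nonempty_iff_ne_empty.mpr h)
    have hcard : ((minF w off Bs).card : ℝ) ≠ 0 := by
      exact_mod_cast Finset.card_ne_zero_of_mem hne.choose_spec
    have : ∀ j : Fin 2, headP w off Bs j
        = if j ∈ minF w off Bs then 1 / ((minF w off Bs).card : ℝ) else 0 := by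
      intro j; simp [headP, h]
    rw [Finset.sum_congr rfl fun j _ => this j]
    have hP : headP w off Bs none = 0 := by simp [headP, h]
    rw [hP, Finset.sum_ite_mem, Finset.univ_inter, Finset.sum_const, nsmul_eq_mul]
    field_simp
    norm_num

lemma outO_total (w : Fin 2 → ℝ) :
    ∀ (m : ℕ) (B : Fin m → Finset (Fin 2)) (off : Fin 2 → ℕ),
      ∑ a : Fin m → Option (Fin 2), outO w off B a = 1 := by
  intro m
  induction m with
  | zero =>
    intro B off
    have h1 : ∀ a : Fin 0 → Option (Fin 2), outO w off B a = 1 := by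
      intro a; unfold outO; exact Finset.prod_of_isEmpty _
    rw [Finset.sum_congr rfl fun a _ => h1 a, Finset.sum_const, nsmul_eq_mul, mul_one]
    norm_num [Fintype.card_fun]
  | succ m ih =>
    intro B off
    have hre := Fintype.sum_equiv (Fin.consEquiv fun _ => Option (Fin 2))
      (fun p : Option (Fin 2) × (Fin m → Option (Fin 2)) => outO w off B (Fin.cons p.1 p.2))
      (outO w off B) (fun p => rfl)
    rw [← hre, Fintype.sum_prod_type]
    calc ∑ x : Option (Fin 2), ∑ a' : Fin m → Option (Fin 2), outO w off B (Fin.cons x a')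
        = ∑ x : Option (Fin 2), headP w off (B 0) x := by
          refine Finset.sum_congr rfl fun x _ => ?_
          rw [Finset.sum_congr rfl fun a' _ => outO_cons w off B x a', ← Finset.mul_sum,
            ih _ _, mul_one]
      _ = 1 := headP_total w off (B 0)


lemma minF_single0 (w : Fin 2 → ℝ) (off : Fin 2 → ℕ) : minF w off {0} = {0} := by
  ext j
  fin_cases j <;> simp [minF]

lemma minF_single1 (w : Fin 2 → ℝ) (off : Fin 2 → ℕ) : minF w off {1} = {1} := by
  ext j
  fin_cases j <;> simp [minF]

lemma minF_univ_lt {w : Fin 2 → ℝ} (off : Fin 2 → ℕ)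
    (h : (off 0 : ℝ) / w 0 < (off 1 : ℝ) / w 1) : minF w off Finset.univ = {0} := by
  ext j
  fin_cases j <;> simp [minF, Fin.forall_fin_two] <;>
    first | exact h.le | exact h | linarith

lemma minF_univ_gt {w : Fin 2 → ℝ} (off : Fin 2 → ℕ)
    (h : (off 1 : ℝ) / w 1 < (off 0 : ℝ) / w 0) : minF w off Finset.univ = {1} := by
  ext j
  fin_cases j <;> simp [minF, Fin.forall_fin_two] <;>
    first | exact h.le | exact h | linarith

lemma minF_univ_eq {w : Fin 2 → ℝ} (off : Fin 2 → ℕ)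
    (h : (off 0 : ℝ) / w 0 = (off 1 : ℝ) / w 1) : minF w off Finset.univ = Finset.univ := by
  ext j
  fin_cases j <;> simp [minF, Fin.forall_fin_two] <;>
    first | exact h.le | exact h.ge | linarith

lemma bridge (w : Fin 2 → ℝ) :
    ∀ (m : ℕ) (B : Fin m → Finset (Fin 2)) (u : Fin m → ℝ),
      (∀ k, u k = 0 ∨ u k = 1) → ∀ (off : Fin 2 → ℕ),
      ∑ a : Fin m → Option (Fin 2), outO w off B a * realizedUtil u a 0
        = W w (List.ofFn fun k => (decide (u k = 1), decide ((1 : Fin 2) ∈ B k),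
            decide ((0 : Fin 2) ∈ B k))) (off 0) (off 1) := by
  intro m
  induction m with
  | zero =>
    intro B u hu off
    simp [W, realizedUtil]
  | succ m ih =>
    intro B u hu off
    have hre := Fintype.sum_equiv (Fin.consEquiv fun _ => Option (Fin 2))
      (fun p : Option (Fin 2) × (Fin m → Option (Fin 2)) =>
        outO w off B (Fin.cons p.1 p.2) * realizedUtil u (Fin.cons p.1 p.2) 0)
      (fun a => outO w off B a * realizedUtil u a 0) (fun p => rfl)
    rw [← hre, Fintype.sum_prod_type]
    set L' : List (Bool × Bool × Bool) := List.ofFn fun k : Fin m =>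
      (decide (u k.succ = 1), decide ((1 : Fin 2) ∈ B k.succ),
        decide ((0 : Fin 2) ∈ B k.succ)) with hL'
    have hstep : ∀ x : Option (Fin 2),
        ∑ a' : Fin m → Option (Fin 2),
          outO w off B (Fin.cons x a') * realizedUtil u (Fin.cons x a') 0
        = headP w off (B 0) x * ((if x = some 0 then u 0 else 0)
            + W w L' (off 0 + if x = some 0 then 1 else 0)
                (off 1 + if x = some 1 then 1 else 0)) := by
      intro x
      have he : ∀ a', outO w off B (Fin.cons x a') * realizedUtil u (Fin.cons x a') 0
          = headP w off (B 0) x *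
            (outO w (fun j => off j + if x = some j then 1 else 0) (fun i => B i.succ) a'
                * (if x = some 0 then u 0 else 0)
             + outO w (fun j => off j + if x = some j then 1 else 0) (fun i => B i.succ) a'
                * realizedUtil (fun i => u i.succ) a' 0) := by
        intro a'
        rw [outO_cons, realizedUtil_cons]
        ring
      rw [Finset.sum_congr rfl fun a' _ => he a', ← Finset.mul_sum, Finset.sum_add_distrib,
        ← Finset.sum_mul, outO_total, one_mul,
        ih (fun i => B i.succ) (fun i => u i.succ) (fun k => hu k.succ)
          (fun j => off j + if x = some j then 1 else 0)]
    rw [Finset.sum_congr rfl fun x _ => hstep x, List.ofFn_succ, Fintype.sum_option,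
      Fin.sum_univ_two, ← hL']
    have hve : (Finset.univ : Finset (Fin 2)) ≠ ∅ := Finset.univ_nonempty.ne_empty
    have hu0 : u 0 = if decide (u 0 = 1) = true then 1 else 0 := by
      rcases hu 0 with h | h <;> simp [h]
    rcases Classical.em ((0 : Fin 2) ∈ B 0) with h0 | h0 <;>
      rcases Classical.em ((1 : Fin 2) ∈ B 0) with h1 | h1
    · -- both bid
      have hB : B 0 = Finset.univ := by
        ext j; fin_cases j <;> simp [h0, h1]
      rcases lt_trichotomy ((off 0 : ℝ) / w 0) ((off 1 : ℝ) / w 1) with hc | hc | hc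
      · have hm := minF_univ_lt off hc
        simp only [headP, hB, hm, h0, h1, decide_eq_true_eq]
        simp only [Finset.mem_univ, Finset.mem_singleton, Finset.notMem_empty, decide_true, decide_false, zero_ne_one, one_ne_zero, W, if_pos hc]
        rw [← hu0]
        simp [hve]
      · have hm := minF_univ_eq off hc
        simp only [headP, hB, hm, h0, h1]
        simp only [Finset.mem_univ, Finset.mem_singleton, Finset.notMem_empty, decide_true, decide_false, zero_ne_one, one_ne_zero, W, if_neg (not_lt.mpr hc.le), if_neg (not_lt.mpr hc.ge)]
        rw [← hu0]
        simp [hve, Finset.card_univ]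
        ring
      · have hm := minF_univ_gt off hc
        simp only [headP, hB, hm, h0, h1]
        simp only [Finset.mem_univ, Finset.mem_singleton, Finset.notMem_empty, decide_true, decide_false, zero_ne_one, one_ne_zero, W, if_neg (asymm hc), if_pos hc]
        simp [hve]
    · -- only agent 0 bids
      have hB : B 0 = {0} := by
        ext j; fin_cases j <;> simp [h0, h1]
      simp only [headP, hB, minF_single0, h0, h1]
      simp only [Finset.mem_univ, Finset.mem_singleton, Finset.notMem_empty, decide_true, decide_false, zero_ne_one, one_ne_zero, W]
      rw [← hu0]
      simp
    · -- only agent 1 bids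
      have hB : B 0 = {1} := by
        ext j; fin_cases j <;> simp [h0, h1]
      simp only [headP, hB, minF_single1, h0, h1]
      simp only [Finset.mem_univ, Finset.mem_singleton, Finset.notMem_empty, decide_true, decide_false, zero_ne_one, one_ne_zero, W]
      simp
    · -- nobody bids
      have hB : B 0 = ∅ := by
        ext j; fin_cases j <;> simp [h0, h1]
      simp only [headP, hB, h0, h1]
      simp only [Finset.mem_univ, Finset.mem_singleton, Finset.notMem_empty, decide_true, decide_false, zero_ne_one, one_ne_zero, W]
      simp

end SPaux

/-- **The Weighted Balanced LIKE mechanism is strategy-proof for two agents with 0/1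
utilities, for arbitrary positive weights.**
With `n = 2` agents having weights `w 0, w 1 > 0` and utilities `u i k ∈ {0,1}`, for
any fixed bid set `S2` of agent 2 and any alternative bid set `S1` that agent 1 could
report, agent 1's expected total utility (w.r.t. her true utilities `u 0`) under the
Weighted Balanced LIKE process when bidding truthfully (bidding for item `k` iff
`u 0 k > 0`) is at least her expected total utility when reporting `S1`. -/


theorem weightedBalancedLike_strategyproof_two_agents (m : ℕ) (w : Fin 2 → ℝ)
    (hw : ∀ j, 0 < w j) (u : Fin 2 → Fin m → ℝ)
    (h01 : ∀ i k, u i k = 0 ∨ u i k = 1) (S2 S1 : Finset (Fin m)) :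
    expUtil w (mkBids ![Finset.univ.filter (fun k => 0 < u 0 k), S2]) (u 0) 0 ≥
      expUtil w (mkBids ![S1, S2]) (u 0) 0 := by
  have hw0 := hw 0
  have hw1 := hw 1
  have key : ∀ B : Fin m → Finset (Fin 2), expUtil w B (u 0) 0
      = SPaux.W w (List.ofFn fun k => (decide (u 0 k = 1), decide ((1 : Fin 2) ∈ B k),
          decide ((0 : Fin 2) ∈ B k))) 0 0 := by
    intro B
    rw [expUtil, Finset.sum_congr rfl fun a _ => by rw [SPaux.outcomeProb_eq]]
    exact SPaux.bridge w m B (u 0) (h01 0) (fun _ => 0)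
  set Bt : Fin m → Finset (Fin 2) :=
    mkBids ![Finset.univ.filter (fun k => 0 < u 0 k), S2] with hBt
  set Bd : Fin m → Finset (Fin 2) := mkBids ![S1, S2] with hBd
  have hmem0t : ∀ k, ((0 : Fin 2) ∈ Bt k ↔ 0 < u 0 k) := by
    intro k; simp [hBt, mkBids]
  have hmem1t : ∀ k, ((1 : Fin 2) ∈ Bt k ↔ k ∈ S2) := by
    intro k; simp [hBt, mkBids]
  have hmem1d : ∀ k, ((1 : Fin 2) ∈ Bd k ↔ k ∈ S2) := by
    intro k; simp [hBd, mkBids]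
  set Lt : List (Bool × Bool × Bool) := List.ofFn fun k =>
    (decide (u 0 k = 1), decide ((1 : Fin 2) ∈ Bt k), decide ((0 : Fin 2) ∈ Bt k)) with hLt
  set Ld : List (Bool × Bool × Bool) := List.ofFn fun k =>
    (decide (u 0 k = 1), decide ((1 : Fin 2) ∈ Bd k), decide ((0 : Fin 2) ∈ Bd k)) with hLd
  have hmap : Ld.map (fun p => (p.1, p.2.1)) = Lt.map (fun p => (p.1, p.2.1)) := by
    rw [hLt, hLd, List.map_ofFn, List.map_ofFn]
    congr 1
    funext k
    simp only [Function.comp]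
    congr 1
    exact decide_eq_decide.mpr (by rw [hmem1d k, hmem1t k])
  have htruth : ∀ p ∈ Lt, p.2.2 = p.1 := by
    intro p hp
    rw [hLt, List.mem_ofFn] at hp
    obtain ⟨k, hk⟩ := hp
    rw [← hk]
    simp only
    apply decide_eq_decide.mpr
    rw [hmem0t k]
    rcases h01 0 k with h | h <;> simp [h]
  rw [key Bt, key Bd, ← hLt, ← hLd]
  calc SPaux.W w Ld 0 0 ≤ SPaux.V w (Ld.map fun p => (p.1, p.2.1)) 0 0 :=
        SPaux.W_le_V hw0 hw1 Ld 0 0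
    _ = SPaux.V w (Lt.map fun p => (p.1, p.2.1)) 0 0 := by rw [hmap]
    _ = SPaux.W w Lt 0 0 := (SPaux.W_truthful Lt htruth 0 0).symm


end
end

section
/- The Balanced LIKE mechanism is not strategy-proof for three agents with 0/1 utilities: in the instance with agents A, B, C and items I_1, I_2, I_3, where A has utility 1 for all three items, B has utility 1 for I_1 and I_3 and 0 for I_2, and C has utility 1 only for I_2, if B and C bid truthfully then agent A's expected total utility under the Balanced LIKE process equals 9/8 when A bids truthfully (for all three items), but equals 5/4 when A bids only for I_2 and I_3; in particular 5/4 > 9/8, so A strictly gains by misreporting. -/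
open Finset

attribute [local instance] Classical.propDecidable

noncomputable section

-- Auxiliary (computable) mirror of the mechanism, used to evaluate the example.
def minSetNat {n m : ℕ} (B : Fin m → Finset (Fin n)) (a : Fin m → Option (Fin n)) (k : Fin m) :
    Finset (Fin n) :=
  (B k).filter fun j => ∀ l ∈ B k, countBefore a j k ≤ countBefore a l k

def stepN {n m : ℕ} (B : Fin m → Finset (Fin n)) (a : Fin m → Option (Fin n)) (k : Fin m) : ℕ :=
  if B k = ∅ then (if a k = none then 2 else 0)
  else match a k with
    | none => 0
    | some j => if j ∈ minSetNat B a k then 2 / (minSetNat B a k).card else 0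

def totalN (B : Fin 3 → Finset (Fin 3)) : ℕ :=
  ∑ a : Fin 3 → Option (Fin 3), (∏ k, stepN B a k) *
    (Finset.univ.filter fun k => a k = some 0).card

lemma minSet_one_eq {n m : ℕ} (B : Fin m → Finset (Fin n)) (a : Fin m → Option (Fin n))
    (k : Fin m) : minSet (fun _ => (1:ℝ)) B a k = minSetNat B a k := by
  unfold minSet minSetNat
  refine Finset.filter_congr fun j hj => ?_
  simp [Nat.cast_le]

lemma stepProb_one_eq {n m : ℕ} (B : Fin m → Finset (Fin n)) (a : Fin m → Option (Fin n))
    (k : Fin m) (hc : (B k).card ≤ 2) :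
    stepProb (fun _ => (1:ℝ)) B a k = (stepN B a k : ℝ) / 2 := by
  unfold stepProb stepN
  cases hak : a k with
  | none => split_ifs <;> simp_all
  | some j =>
    rw [minSet_one_eq]
    by_cases h : B k = ∅
    · simp [h]
    · rw [if_neg h, if_neg h]
      show (if j ∈ minSetNat B a k then 1 / ((minSetNat B a k).card : ℝ) else 0)
        = ((if j ∈ minSetNat B a k then 2 / (minSetNat B a k).card else 0 : ℕ) : ℝ) / 2
      by_cases hj : j ∈ minSetNat B a k
      · rw [if_pos hj, if_pos hj]
        have h1 : 1 ≤ (minSetNat B a k).card := Finset.card_pos.mpr ⟨j, hj⟩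
        have h2 : (minSetNat B a k).card ≤ 2 := by
          unfold minSetNat
          exact le_trans (Finset.card_le_card (Finset.filter_subset _ _)) hc
        set c := (minSetNat B a k).card with hcdef
        interval_cases c <;> norm_num
      · rw [if_neg hj, if_neg hj]; simp

lemma expUtil_one_eq (B : Fin 3 → Finset (Fin 3)) (u : Fin 3 → ℝ) (hu : ∀ k, u k = 1)
    (hc : ∀ k, (B k).card ≤ 2) :
    expUtil (fun _ => (1:ℝ)) B u 0 = (totalN B : ℝ) / 8 := by
  unfold expUtil totalN
  push_cast
  rw [Finset.sum_div]
  refine Finset.sum_congr rfl fun a _ => ?_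
  have h1 : outcomeProb (fun _ => (1:ℝ)) B a = (∏ k, (stepN B a k : ℝ)) / 8 := by
    unfold outcomeProb
    rw [show (8:ℝ) = 2 ^ 3 by norm_num]
    calc (∏ k, stepProb (fun _ => (1:ℝ)) B a k)
        = ∏ k, ((stepN B a k : ℝ) / 2) :=
          Finset.prod_congr rfl fun k _ => stepProb_one_eq B a k (hc k)
      _ = (∏ k, (stepN B a k : ℝ)) / 2 ^ 3 := by
          rw [Finset.prod_div_distrib, Finset.prod_const]; simp
  have h2 : realizedUtil u a 0 = ((Finset.univ.filter fun k => a k = some 0).card : ℝ) := by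
    unfold realizedUtil
    rw [Finset.card_filter]
    push_cast
    exact Finset.sum_congr rfl fun k _ => by split_ifs <;> simp [hu]
  rw [h1, h2]
  push_cast
  ring

/-- **The Balanced LIKE mechanism is not strategy-proof for three agents with 0/1
utilities.**
Agents `A = 0`, `B = 1`, `C = 2` and items `I₁ = 0`, `I₂ = 1`, `I₃ = 2`:
`A` has utility 1 for all three items, `B` has utility 1 for `I₁, I₃` and 0 for `I₂`,
and `C` has utility 1 only for `I₂`.  If `B` and `C` bid truthfully, then under the
Balanced LIKE process (all weights `1`) agent `A`'s expected total utility equals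
`9/8` when `A` bids truthfully (for all three items), but equals `5/4` when `A` bids
only for `I₂` and `I₃`; and `5/4 > 9/8`, so `A` strictly gains by misreporting. -/
theorem balancedLike_not_strategyproof_three_agents :
    ∀ u : Fin 3 → Fin 3 → ℝ, u = ![![1, 1, 1], ![1, 0, 1], ![0, 1, 0]] →
    expUtil (fun _ => (1 : ℝ))
        (mkBids fun j => Finset.univ.filter fun k => 0 < u j k) (u 0) 0 = 9 / 8 ∧
    expUtil (fun _ => (1 : ℝ))
        (mkBids (Function.update
          (fun j => Finset.univ.filter fun k => 0 < u j k) 0 ({1, 2} : Finset (Fin 3))))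
        (u 0) 0 = 5 / 4 ∧
    (5 / 4 : ℝ) > 9 / 8 := by
  intro u hu; subst hu
  have hu0 : ∀ k : Fin 3, (![![1, 1, 1], ![1, 0, 1], ![0, 1, 0]] : Fin 3 → Fin 3 → ℝ) 0 k = 1 :=
    fun k => by fin_cases k <;> norm_num
  have hB1 : (mkBids fun j => Finset.univ.filter fun k =>
      0 < (![![1, 1, 1], ![1, 0, 1], ![0, 1, 0]] : Fin 3 → Fin 3 → ℝ) j k)
      = ![{0, 1}, {0, 2}, {0, 1}] := by
    funext k
    ext j
    fin_cases k <;> fin_cases j <;> simp [mkBids] <;> norm_num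
  have hB2 : (mkBids (Function.update
      (fun j => Finset.univ.filter fun k =>
        0 < (![![1, 1, 1], ![1, 0, 1], ![0, 1, 0]] : Fin 3 → Fin 3 → ℝ) j k)
      0 ({1, 2} : Finset (Fin 3))))
      = ![{1}, {0, 2}, {0, 1}] := by
    funext k
    ext j
    simp only [mkBids, Finset.mem_filter, Finset.mem_univ, true_and, Function.update_apply]
    fin_cases k <;> fin_cases j <;>
      simp [mkBids, Function.update] <;> norm_num
  refine ⟨?_, ?_, by norm_num⟩
  · rw [hB1, expUtil_one_eq _ _ hu0 (by decide)]
    rw [show totalN ![{0, 1}, {0, 2}, {0, 1}] = 9 from by decide]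
    norm_num
  · rw [hB2, expUtil_one_eq _ _ hu0 (by decide)]
    rw [show totalN ![{1}, {0, 2}, {0, 1}] = 10 from by decide]
    norm_num


end
end

section
/- The Balanced LIKE mechanism is not strategy-proof for two agents with general utilities: in the instance with agents A and B and items I_1, I_2, where A has utility 1/2 for both items, and B has utility 1/4 for I_1 and 3/4 for I_2, if A bids truthfully then agent B's expected total utility under the Balanced LIKE process equals 1/2 when B bids truthfully (for both items), but equals 3/4 when B bids only for I_2; in particular 3/4 > 1/2, so B strictly gains by misreporting. -/
open Finset

attribute [local instance] Classical.propDecidable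

noncomputable section

lemma cb0 (a : Fin 2 → Option (Fin 2)) (j : Fin 2) : countBefore a j 0 = 0 := by
  simp [countBefore, Finset.filter_eq_empty_iff, Fin.lt_def]

lemma cb1 (a : Fin 2 → Option (Fin 2)) (j : Fin 2) :
    countBefore a j 1 = if a 0 = some j then 1 else 0 := by
  rw [countBefore, Finset.card_filter, Fin.sum_univ_two]
  norm_num [Fin.lt_def]

lemma ms0 (w : Fin 2 → ℝ) (B : Fin 2 → Finset (Fin 2)) (a : Fin 2 → Option (Fin 2)) :
    minSet w B a 0 = B 0 := by
  rw [minSet, Finset.filter_true_of_mem]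
  intro j hj l hl
  simp [cb0]

lemma ms1 (B : Fin 2 → Finset (Fin 2)) (hB : B 1 = univ) (a : Fin 2 → Option (Fin 2)) :
    minSet (fun _ => (1:ℝ)) B a 1 =
      if a 0 = some 0 then {1} else if a 0 = some 1 then {0} else univ := by
  ext j
  simp only [minSet, hB, Finset.mem_filter, Finset.mem_univ, true_and, cb1, div_one,
    Fin.forall_fin_two]
  fin_cases j <;> rcases h : a 0 with _ | x
  any_goals (fin_cases x)
  all_goals simp [h]

lemma sum_pairs (f : (Fin 2 → Option (Fin 2)) → ℝ) :
    ∑ a : Fin 2 → Option (Fin 2), f a = ∑ p : Option (Fin 2) × Option (Fin 2), f ![p.1, p.2] := by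
  rw [← (finTwoArrowEquiv (Option (Fin 2))).symm.sum_comp]; rfl

lemma exp1 (B : Fin 2 → Finset (Fin 2)) (hB : B = fun _ => univ) :
    expUtil (fun _ => (1:ℝ)) B ![(1:ℝ)/4, 3/4] 1 = 1/2 := by
  subst hB
  rw [expUtil, sum_pairs, Fintype.sum_prod_type]
  simp only [Fintype.sum_option, Fin.sum_univ_two]
  norm_num [outcomeProb, stepProb, realizedUtil, Fin.prod_univ_two, Fin.sum_univ_two,
    ms0, ms1, Finset.card_univ, Finset.univ_eq_empty_iff, Matrix.cons_val_zero,
    Matrix.cons_val_one, Matrix.head_cons]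

lemma exp2 (B : Fin 2 → Finset (Fin 2)) (hB0 : B 0 = {0}) (hB1 : B 1 = univ) :
    expUtil (fun _ => (1:ℝ)) B ![(1:ℝ)/4, 3/4] 1 = 3/4 := by
  rw [expUtil, sum_pairs, Fintype.sum_prod_type]
  simp only [Fintype.sum_option, Fin.sum_univ_two]
  norm_num [outcomeProb, stepProb, realizedUtil, Fin.prod_univ_two, Fin.sum_univ_two,
    ms0, ms1 B hB1, hB0, hB1, Finset.card_univ, Finset.univ_eq_empty_iff,
    Matrix.cons_val_zero, Matrix.cons_val_one, Matrix.head_cons]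

lemma bids1 :
    mkBids (fun j : Fin 2 => Finset.univ.filter fun k : Fin 2 =>
      0 < ![![(1:ℝ)/2, 1/2], ![1/4, 3/4]] j k) = fun _ => univ := by
  funext k; ext j
  fin_cases j <;> fin_cases k <;>
    norm_num [mkBids, Matrix.cons_val_zero, Matrix.cons_val_one, Matrix.head_cons]

lemma bids2 :
    mkBids (Function.update
      (fun j : Fin 2 => Finset.univ.filter fun k : Fin 2 =>
        0 < ![![(1:ℝ)/2, 1/2], ![1/4, 3/4]] j k) 1 ({1} : Finset (Fin 2))) =
    ![({0} : Finset (Fin 2)), univ] := by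
  funext k; ext j
  fin_cases j <;> fin_cases k <;>
    norm_num [mkBids, Function.update, Matrix.cons_val_zero, Matrix.cons_val_one,
      Matrix.head_cons, Fin.ext_iff]

/-- **The Balanced LIKE mechanism is not strategy-proof for two agents with general
utilities.**
Agents `A = 0` and `B = 1` and items `I₁ = 0`, `I₂ = 1`: `A` has utility `1/2` for
both items, `B` has utility `1/4` for `I₁` and `3/4` for `I₂`.  If `A` bids truthfully,
then under the Balanced LIKE process (all weights `1`) agent `B`'s expected total
utility equals `1/2` when `B` bids truthfully (for both items), but equals `3/4` when
`B` bids only for `I₂`; and `3/4 > 1/2`, so `B` strictly gains by misreporting. -/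
theorem balancedLike_not_strategyproof_general_utilities :
    ∀ u : Fin 2 → Fin 2 → ℝ, u = ![![1 / 2, 1 / 2], ![1 / 4, 3 / 4]] →
    expUtil (fun _ => (1 : ℝ))
        (mkBids fun j => Finset.univ.filter fun k => 0 < u j k) (u 1) 1 = 1 / 2 ∧
    expUtil (fun _ => (1 : ℝ))
        (mkBids (Function.update
          (fun j => Finset.univ.filter fun k => 0 < u j k) 1 ({1} : Finset (Fin 2))))
        (u 1) 1 = 3 / 4 ∧
    (3 / 4 : ℝ) > 1 / 2 := by
  intro u hu
  subst hu
  refine ⟨?_, ?_, by norm_num⟩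
  · rw [show (![![1 / 2, 1 / 2], ![1 / 4, 3 / 4]] : Fin 2 → Fin 2 → ℝ) 1 = ![(1:ℝ)/4, 3/4]
      from rfl]
    exact exp1 _ bids1
  · rw [show (![![1 / 2, 1 / 2], ![1 / 4, 3 / 4]] : Fin 2 → Fin 2 → ℝ) 1 = ![(1:ℝ)/4, 3/4]
      from rfl, bids2]
    exact exp2 _ rfl rfl

end
end

section
/- The LIKE mechanism is envy-free ex-ante: with 0/1 utilities and all agents bidding truthfully (so that B_k = {l : u_l(F_k) = 1}), for every pair of agents i and j, agent i's expected utility for agent j's allocation is at most agent i's expected utility for her own allocation, i.e., ∑_{k : j ∈ B_k} u_i(F_k)/|B_k| ≤ ∑_{k : i ∈ B_k} u_i(F_k)/|B_k|. -/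
open Finset

attribute [local instance] Classical.propDecidable

/-- **The LIKE mechanism is envy-free ex-ante.**
There are `n` agents and `m` items, with 0/1 utilities `u i k ∈ {0,1}`.  All agents bid
truthfully, so the set of bidders for item `k` is `B k = {l : u l k = 1}`.  Under the
LIKE mechanism each item is allocated uniformly at random among its bidders, so agent
`j`'s probability of receiving item `k` is `1/|B k|` if `j ∈ B k` and `0` otherwise.
Then for every pair of agents `i, j`, agent `i`'s expected utility for agent `j`'s
allocation is at most her expected utility for her own allocation:
`∑_{k : j ∈ B k} u i k / |B k| ≤ ∑_{k : i ∈ B k} u i k / |B k|`. -/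
theorem like_envyFree_exAnte (n m : ℕ) (u : Fin n → Fin m → ℝ)
    (h01 : ∀ i k, u i k = 0 ∨ u i k = 1)
    (B : Fin m → Finset (Fin n))
    (hB : ∀ k, B k = Finset.univ.filter fun l => u l k = 1)
    (i j : Fin n) :
    ∑ k ∈ Finset.univ.filter (fun k => j ∈ B k), u i k / (B k).card ≤
      ∑ k ∈ Finset.univ.filter (fun k => i ∈ B k), u i k / (B k).card := by
  have hmem : ∀ k, i ∈ B k ↔ u i k = 1 := by
    intro k; rw [hB k]; simp
  have key : ∀ k, k ∈ Finset.univ.filter (fun k => j ∈ B k) →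
      k ∉ Finset.univ.filter (fun k => i ∈ B k) → u i k / (B k).card = 0 := by
    intro k _ hk
    simp only [mem_filter, mem_univ, true_and] at hk
    rcases h01 i k with h | h
    · simp [h]
    · exact absurd ((hmem k).2 h) hk
  have nonneg : ∀ k ∈ Finset.univ.filter (fun k => i ∈ B k), 0 ≤ u i k / (B k).card := by
    intro k _
    rcases h01 i k with h | h <;> positivity
  calc ∑ k ∈ Finset.univ.filter (fun k => j ∈ B k), u i k / (B k).card
      = ∑ k ∈ (Finset.univ.filter (fun k => j ∈ B k)) ∩
          (Finset.univ.filter (fun k => i ∈ B k)), u i k / (B k).card := by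
        refine (Finset.sum_subset (Finset.inter_subset_left) ?_).symm
        intro k hk hk'
        exact key k hk (fun h => hk' (Finset.mem_inter.2 ⟨hk, h⟩))
    _ ≤ ∑ k ∈ Finset.univ.filter (fun k => i ∈ B k), u i k / (B k).card := by
        refine Finset.sum_le_sum_of_subset_of_nonneg (Finset.inter_subset_right) ?_
        intro k hk _; exact nonneg k hk
end

section
/- The Weighted LIKE mechanism is envy-free ex-ante: with 0/1 utilities and all agents bidding truthfully (so that B_k = {l : u_l(F_k) = 1}), for every pair of agents i and j, E[u_i(A_j)]/w_j ≤ E[u_i(A_i)]/w_i, where E[u_i(A_j)] = ∑_{k : j ∈ B_k} (w_j/∑_{l∈B_k} w_l)·u_i(F_k) and E[u_i(A_i)] = ∑_{k : i ∈ B_k} (w_i/∑_{l∈B_k} w_l)·u_i(F_k). -/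
open Finset

attribute [local instance] Classical.propDecidable

/-- **The Weighted LIKE mechanism is envy-free ex-ante.**
There are `n` agents with positive weights `w` and `m` items, with 0/1 utilities
`u i k ∈ {0,1}`.  All agents bid truthfully, so the set of bidders for item `k` is
`B k = {l : u l k = 1}`.  Under the Weighted LIKE mechanism, agent `j ∈ B k` receives
item `k` with probability `w j / ∑_{l ∈ B k} w l`.  Then for every pair of agents
`i, j`: `E[u_i(A_j)]/w_j ≤ E[u_i(A_i)]/w_i`, where
`E[u_i(A_j)] = ∑_{k : j ∈ B k} (w j / ∑_{l ∈ B k} w l) · u i k`. -/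
theorem weightedLike_envyFree_exAnte (n m : ℕ) (w : Fin n → ℝ) (hw : ∀ j, 0 < w j)
    (u : Fin n → Fin m → ℝ) (h01 : ∀ i k, u i k = 0 ∨ u i k = 1)
    (B : Fin m → Finset (Fin n))
    (hB : ∀ k, B k = Finset.univ.filter fun l => u l k = 1)
    (i j : Fin n) :
    (∑ k ∈ Finset.univ.filter (fun k => j ∈ B k),
        (w j / ∑ l ∈ B k, w l) * u i k) / w j ≤
      (∑ k ∈ Finset.univ.filter (fun k => i ∈ B k),
        (w i / ∑ l ∈ B k, w l) * u i k) / w i := by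
  have hwi := hw i
  have hwj := hw j
  have hS : ∀ k : Fin m, ∀ a : Fin n, a ∈ B k → 0 < ∑ l ∈ B k, w l := by
    intro k a ha
    exact Finset.sum_pos (fun l _ => hw l) ⟨a, ha⟩
  have key : ∀ (a : Fin n), 0 < w a →
      (∑ k ∈ Finset.univ.filter (fun k => a ∈ B k),
        (w a / ∑ l ∈ B k, w l) * u i k) / w a
      = ∑ k ∈ Finset.univ.filter (fun k => a ∈ B k), u i k / ∑ l ∈ B k, w l := by
    intro a hwa
    rw [Finset.sum_div]
    refine Finset.sum_congr rfl fun k hk => ?_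
    rw [div_mul_eq_mul_div, div_div, mul_comm (∑ l ∈ B k, w l) (w a),
      mul_div_mul_left _ _ hwa.ne']
  rw [key i hwi, key j hwj]
  -- restrict LHS to terms with u i k = 1 (hence i ∈ B k)
  have hsub : (Finset.univ.filter (fun k => j ∈ B k ∧ u i k = 1)) ⊆
      Finset.univ.filter (fun k : Fin m => i ∈ B k) := by
    intro k hk
    simp only [Finset.mem_filter] at hk ⊢
    exact ⟨Finset.mem_univ k, by rw [hB k]; simp [hk.2.2]⟩
  have hLHS : ∑ k ∈ Finset.univ.filter (fun k => j ∈ B k), u i k / ∑ l ∈ B k, w l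
      = ∑ k ∈ Finset.univ.filter (fun k => j ∈ B k ∧ u i k = 1),
          u i k / ∑ l ∈ B k, w l := by
    rw [← Finset.filter_filter]
    refine (Finset.sum_filter_of_ne fun k hk hne => ?_).symm
    rcases h01 i k with h | h
    · simp [h] at hne
    · exact h
  rw [hLHS]
  refine Finset.sum_le_sum_of_subset_of_nonneg hsub fun k hk _ => ?_
  simp only [Finset.mem_filter] at hk
  have hSk := hS k i hk.2
  rcases h01 i k with h | h <;> simp [h] <;> positivity
end

section
/- The Balanced LIKE mechanism is bounded envy-free ex-post with bound 1: with 0/1 utilities and all agents bidding truthfully, in every outcome of positive probability of the Balanced LIKE process and for every pair of agents i and j, the final bundles satisfy u_i(A_j) ≤ u_i(A_i) + 1. -/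
open Finset

attribute [local instance] Classical.propDecidable

noncomputable section

/-- **The Balanced LIKE mechanism is bounded envy-free ex-post with bound 1.**
With 0/1 utilities and all agents bidding truthfully (the bidders for item `k` are
exactly the agents `l` with `u l k > 0`), in every outcome `a` of positive probability
of the Balanced LIKE process (the Weighted Balanced LIKE process with all weights `1`)
and for every pair of agents `i` and `j`, the final bundles satisfy
`u_i(A_j) ≤ u_i(A_i) + 1`. -/
theorem balancedLike_boundedEnvyFree_exPost (n m : ℕ) (u : Fin n → Fin m → ℝ)
    (h01 : ∀ i k, u i k = 0 ∨ u i k = 1) (B : Fin m → Finset (Fin n))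
    (hB : ∀ k, B k = Finset.univ.filter fun l => 0 < u l k)
    (a : Fin m → Option (Fin n)) (ha : 0 < outcomeProb (fun _ => (1 : ℝ)) B a)
    (i j : Fin n) :
    realizedUtil (u i) a j ≤ realizedUtil (u i) a i + 1 := by
  -- each step probability is nonzero
  have hstep : ∀ k, stepProb (fun _ => (1:ℝ)) B a k ≠ 0 := by
    intro k
    have := ha.ne'
    rw [outcomeProb, Finset.prod_ne_zero_iff] at this
    exact this k (Finset.mem_univ k)
  -- key: if a k = some j', then j' ∈ B k and has minimal count among bidders
  have key : ∀ (k : Fin m) (j' : Fin n), a k = some j' →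
      j' ∈ B k ∧ ∀ l ∈ B k, countBefore a j' k ≤ countBefore a l k := by
    intro k j' hk
    have h := hstep k
    rw [stepProb] at h
    by_cases hBk : B k = ∅
    · simp [hBk, hk] at h
    · rw [if_neg hBk, hk] at h
      simp only at h
      by_cases hmem : j' ∈ minSet (fun _ => (1:ℝ)) B a k
      · have hm := hmem
        rw [minSet, Finset.mem_filter] at hm
        refine ⟨hm.1, fun l hl => ?_⟩
        have := hm.2 l hl
        simp only [div_one] at this
        exact_mod_cast this
      · simp [hmem] at h
  -- membership in B k iff positive utility
  have hBmem : ∀ (k : Fin m) (l : Fin n), l ∈ B k ↔ 0 < u l k := by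
    intro k l; rw [hB k]; simp
  -- items allocated to i have u i k = 1
  have hui : ∀ k, a k = some i → u i k = 1 := by
    intro k hk
    have hi := (key k i hk).1
    rcases h01 i k with h0 | h1
    · exfalso; have := (hBmem k i).1 hi; rw [h0] at this; exact lt_irrefl 0 this
    · exact h1
  set T : Finset (Fin m) := Finset.univ.filter fun k => a k = some j ∧ 0 < u i k with hT
  set Ci : Finset (Fin m) := Finset.univ.filter fun k => a k = some i with hCi
  have hrj : realizedUtil (u i) a j = (T.card : ℝ) := by
    rw [realizedUtil, hT, ← Finset.sum_boole]
    apply Finset.sum_congr rfl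
    intro k _
    by_cases hk : a k = some j
    · rcases h01 i k with h0 | h1
      · simp [hk, h0]
      · simp [hk, h1]
    · simp [hk]
  have hri : realizedUtil (u i) a i = (Ci.card : ℝ) := by
    rw [realizedUtil, hCi, ← Finset.sum_boole]
    apply Finset.sum_congr rfl
    intro k _
    by_cases hk : a k = some i
    · simp [hk, hui k hk]
    · simp [hk]
  rw [hrj, hri]
  have hcard : T.card ≤ Ci.card + 1 := by
    rcases Finset.eq_empty_or_nonempty T with hTe | hTne
    · simp [hTe]
    · obtain ⟨k0, hk0, hk0max⟩ := T.exists_max_image id hTne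
      rw [hT, Finset.mem_filter] at hk0
      have hk0j : a k0 = some j := hk0.2.1
      have hk0i : i ∈ B k0 := (hBmem k0 i).2 hk0.2.2
      -- T ⊆ insert k0 (filter ...)
      have hsub : T ⊆ insert k0 (Finset.univ.filter fun k' => k' < k0 ∧ a k' = some j) := by
        intro k hk
        by_cases hkk : k = k0
        · subst hkk; exact Finset.mem_insert_self _ _
        · apply Finset.mem_insert_of_mem
          rw [Finset.mem_filter]
          have hle := hk0max k hk
          rw [hT, Finset.mem_filter] at hk
          exact ⟨Finset.mem_univ k, lt_of_le_of_ne hle hkk, hk.2.1⟩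
      have h1 : T.card ≤ countBefore a j k0 + 1 := by
        calc T.card ≤ (insert k0 (Finset.univ.filter fun k' => k' < k0 ∧ a k' = some j)).card :=
              Finset.card_le_card hsub
          _ ≤ countBefore a j k0 + 1 := by
              rw [countBefore]; exact Finset.card_insert_le _ _
      have h2 : countBefore a j k0 ≤ countBefore a i k0 := (key k0 j hk0j).2 i hk0i
      have h3 : countBefore a i k0 ≤ Ci.card := by
        apply Finset.card_le_card
        intro k hk
        rw [Finset.mem_filter] at hk
        rw [hCi, Finset.mem_filter]
        exact ⟨Finset.mem_univ k, hk.2.2⟩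
      omega
  calc (T.card : ℝ) ≤ ((Ci.card + 1 : ℕ) : ℝ) := by exact_mod_cast hcard
    _ = (Ci.card : ℝ) + 1 := by push_cast; ring

end
end

section
/- Weighted balancedness invariant: let w_i, w_j > 0, and consider any finite sequence of rounds in which nonnegative integer counts c_i and c_j both start at 0 and in each round at most one of them increases by 1, with the property that c_j increases in a round only if c_j/w_j ≤ c_i/w_i held at the start of that round. Then after every round, c_j/w_j ≤ c_i/w_i + 1/w_j. In particular, every realization of the Weighted Balanced LIKE process in which agent i bids on every item that agent j receives satisfies |A_j|/w_j ≤ |A_i|/w_i + 1/w_j for the final bundle sizes. -/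
open Finset

attribute [local instance] Classical.propDecidable

noncomputable section

/-- Size of agent `j`'s final bundle in outcome `a`. -/
def bundleSize {n m : ℕ} (a : Fin m → Option (Fin n)) (j : Fin n) : ℕ :=
  (Finset.univ.filter fun k => a k = some j).card

/-- **Weighted balancedness invariant.**
(1) Let `wi, wj > 0` and consider nonnegative integer counts `ci, cj : ℕ → ℕ` both
starting at `0` such that in each round at most one of them increases by `1`, and
`cj` increases in a round only if `cj/wj ≤ ci/wi` held at the start of that round.
Then after every round `cj/wj ≤ ci/wi + 1/wj`.
(2) In particular, every realization of positive probability of the Weighted Balanced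
LIKE process in which agent `i` bids on every item that agent `j` receives satisfies
`|A_j|/w_j ≤ |A_i|/w_i + 1/w_j` for the final bundle sizes. -/
theorem weighted_balancedness_invariant :
    (∀ wi wj : ℝ, 0 < wi → 0 < wj → ∀ ci cj : ℕ → ℕ, ci 0 = 0 → cj 0 = 0 →
      (∀ t : ℕ,
        (ci (t + 1) = ci t ∧ cj (t + 1) = cj t) ∨
        (ci (t + 1) = ci t + 1 ∧ cj (t + 1) = cj t) ∨
        (cj (t + 1) = cj t + 1 ∧ ci (t + 1) = ci t ∧
          (cj t : ℝ) / wj ≤ (ci t : ℝ) / wi)) →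
      ∀ t : ℕ, (cj t : ℝ) / wj ≤ (ci t : ℝ) / wi + 1 / wj) ∧
    (∀ (n m : ℕ) (w : Fin n → ℝ), (∀ l, 0 < w l) →
      ∀ (B : Fin m → Finset (Fin n)) (a : Fin m → Option (Fin n)) (i j : Fin n),
        0 < outcomeProb w B a → (∀ k, a k = some j → i ∈ B k) →
        (bundleSize a j : ℝ) / w j ≤ (bundleSize a i : ℝ) / w i + 1 / w j) := by
  have part1 : ∀ wi wj : ℝ, 0 < wi → 0 < wj → ∀ ci cj : ℕ → ℕ, ci 0 = 0 → cj 0 = 0 →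
      (∀ t : ℕ,
        (ci (t + 1) = ci t ∧ cj (t + 1) = cj t) ∨
        (ci (t + 1) = ci t + 1 ∧ cj (t + 1) = cj t) ∨
        (cj (t + 1) = cj t + 1 ∧ ci (t + 1) = ci t ∧
          (cj t : ℝ) / wj ≤ (ci t : ℝ) / wi)) →
      ∀ t : ℕ, (cj t : ℝ) / wj ≤ (ci t : ℝ) / wi + 1 / wj := by
    intro wi wj hwi hwj ci cj hci0 hcj0 hstep t
    induction t with
    | zero =>
      rw [hci0, hcj0]
      simp only [Nat.cast_zero, zero_div, zero_add]
      positivity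
    | succ t ih =>
      rcases hstep t with ⟨h1, h2⟩ | ⟨h1, h2⟩ | ⟨h1, h2, h3⟩
      · rw [h1, h2]; exact ih
      · rw [h1, h2]
        push_cast
        have hmono : (ci t : ℝ) / wi ≤ ((ci t : ℝ) + 1) / wi :=
          (div_le_div_iff_of_pos_right hwi).mpr (by linarith)
        linarith
      · rw [h1, h2]
        push_cast
        rw [add_div]
        linarith
  refine ⟨part1, ?_⟩
  intro n m w hw B a i j hprob hbid
  by_cases hij : i = j
  · subst hij
    have h1 : 0 < 1 / w i := one_div_pos.mpr (hw i)
    linarith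
  -- counts up to time t
  set c : Fin n → ℕ → ℕ := fun l t =>
    (Finset.univ.filter fun k : Fin m => (k : ℕ) < t ∧ a k = some l).card with hc
  have hstepne : ∀ k : Fin m, stepProb w B a k ≠ 0 := by
    intro k hk
    have : outcomeProb w B a = 0 := Finset.prod_eq_zero (Finset.mem_univ k) hk
    linarith
  have hcount : ∀ (l : Fin n) (k : Fin m), countBefore a l k = c l (k : ℕ) := by
    intro l k
    unfold countBefore
    simp only [hc]
    congr 1
  have hsucc_lt : ∀ (l : Fin n) (t : ℕ) (ht : t < m),
      c l (t + 1) = c l t + (if a ⟨t, ht⟩ = some l then 1 else 0) := by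
    intro l t ht
    by_cases h : a ⟨t, ht⟩ = some l
    · rw [if_pos h]
      simp only [hc]
      have hins : (Finset.univ.filter fun k : Fin m => (k : ℕ) < t + 1 ∧ a k = some l)
          = insert ⟨t, ht⟩ (Finset.univ.filter fun k : Fin m => (k : ℕ) < t ∧ a k = some l) := by
        ext k
        simp only [Finset.mem_insert, Finset.mem_filter, Finset.mem_univ, true_and]
        constructor
        · rintro ⟨hk1, hk2⟩
          rcases Nat.lt_succ_iff_lt_or_eq.mp hk1 with h' | h'
          · exact Or.inr ⟨h', hk2⟩
          · exact Or.inl (Fin.ext h')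
        · rintro (rfl | ⟨hk1, hk2⟩)
          · exact ⟨Nat.lt_succ_self t, h⟩
          · exact ⟨Nat.lt_succ_of_lt hk1, hk2⟩
      rw [hins, Finset.card_insert_of_notMem (by simp)]
    · rw [if_neg h]
      simp only [hc, add_zero]
      congr 1
      ext k
      simp only [Finset.mem_filter, Finset.mem_univ, true_and]
      constructor
      · rintro ⟨hk1, hk2⟩
        rcases Nat.lt_succ_iff_lt_or_eq.mp hk1 with h' | h'
        · exact ⟨h', hk2⟩
        · exact absurd hk2 (by rwa [show k = ⟨t, ht⟩ from Fin.ext h'])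
      · rintro ⟨hk1, hk2⟩
        exact ⟨Nat.lt_succ_of_lt hk1, hk2⟩
  have hsucc_ge : ∀ (l : Fin n) (t : ℕ), m ≤ t → c l (t + 1) = c l t := by
    intro l t hmt
    simp only [hc]
    congr 1
    ext k
    have : (k : ℕ) < m := k.isLt
    simp only [Finset.mem_filter, Finset.mem_univ, true_and]
    constructor
    · rintro ⟨_, hk2⟩; exact ⟨by omega, hk2⟩
    · rintro ⟨_, hk2⟩; exact ⟨by omega, hk2⟩
  have hbundle : ∀ l, bundleSize a l = c l m := by
    intro l
    unfold bundleSize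
    simp only [hc]
    congr 1
    ext k
    simp [k.isLt]
  have key : ∀ t : ℕ,
      (c i (t + 1) = c i t ∧ c j (t + 1) = c j t) ∨
      (c i (t + 1) = c i t + 1 ∧ c j (t + 1) = c j t) ∨
      (c j (t + 1) = c j t + 1 ∧ c i (t + 1) = c i t ∧
        (c j t : ℝ) / w j ≤ (c i t : ℝ) / w i) := by
    intro t
    by_cases ht : t < m
    · set k : Fin m := ⟨t, ht⟩ with hk
      by_cases hai : a k = some i
      · refine Or.inr (Or.inl ⟨?_, ?_⟩)
        · rw [hsucc_lt i t ht, if_pos hai]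
        · rw [hsucc_lt j t ht, if_neg (by rw [hai]; simp [Ne.symm hij, hij]), add_zero]
      · by_cases haj : a k = some j
        · refine Or.inr (Or.inr ⟨?_, ?_, ?_⟩)
          · rw [hsucc_lt j t ht, if_pos haj]
          · rw [hsucc_lt i t ht, if_neg hai, add_zero]
          · -- from positivity of step probability, j is in the min set
            have hne := hstepne k
            unfold stepProb at hne
            by_cases hB : B k = ∅
            · rw [if_pos hB, haj] at hne
              simp at hne
            · rw [if_neg hB, haj] at hne
              have hmem : j ∈ minSet w B a k := by
                by_contra hmem
                simp [hmem] at hne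
              rw [minSet, Finset.mem_filter] at hmem
              have := hmem.2 i (hbid k haj)
              rwa [hcount j k, hcount i k] at this
        · refine Or.inl ⟨?_, ?_⟩
          · rw [hsucc_lt i t ht, if_neg hai, add_zero]
          · rw [hsucc_lt j t ht, if_neg haj, add_zero]
    · exact Or.inl ⟨hsucc_ge i t (by omega), hsucc_ge j t (by omega)⟩
  have h0 : ∀ l : Fin n, c l 0 = 0 := by
    intro l
    simp [hc]
  have := part1 (w i) (w j) (hw i) (hw j) (c i) (c j) (h0 i) (h0 j) key m
  rw [hbundle i, hbundle j]
  exact this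

end
end

section
/- The Weighted Balanced LIKE mechanism is bounded envy-free ex-post: with 0/1 utilities, all agents bidding truthfully, and weights satisfying w_j ≥ 1 for all agents j, in every outcome of positive probability of the Weighted Balanced LIKE process and for every pair of agents i and j, the final bundles satisfy u_i(A_j)/w_j ≤ u_i(A_i)/w_i + 1. -/
open Finset

attribute [local instance] Classical.propDecidable

noncomputable section

/-- **The Weighted Balanced LIKE mechanism is bounded envy-free ex-post.**
With 0/1 utilities, all agents bidding truthfully (the bidders for item `k` are exactly
the agents `l` with `u l k > 0`), and weights satisfying `w j ≥ 1` for all agents `j`,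
in every outcome `a` of positive probability of the Weighted Balanced LIKE process and
for every pair of agents `i` and `j`, the final bundles satisfy
`u_i(A_j)/w_j ≤ u_i(A_i)/w_i + 1`. -/
theorem weightedBalancedLike_boundedEnvyFree_exPost (n m : ℕ) (w : Fin n → ℝ)
    (hw : ∀ j, 1 ≤ w j) (u : Fin n → Fin m → ℝ)
    (h01 : ∀ i k, u i k = 0 ∨ u i k = 1) (B : Fin m → Finset (Fin n))
    (hB : ∀ k, B k = Finset.univ.filter fun l => 0 < u l k)
    (a : Fin m → Option (Fin n)) (ha : 0 < outcomeProb w B a) (i j : Fin n) :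
    realizedUtil (u i) a j / w j ≤ realizedUtil (u i) a i / w i + 1 := by

  classical
  have hwpos : ∀ l, (0:ℝ) < w l := fun l => lt_of_lt_of_le one_pos (hw l)
  have hstep : ∀ k, stepProb w B a k ≠ 0 := by
    intro k hk
    have h0 : outcomeProb w B a = 0 :=
      Finset.prod_eq_zero (Finset.mem_univ k) hk
    rw [h0] at ha; exact lt_irrefl 0 ha
  have hmin : ∀ k jj, a k = some jj → jj ∈ minSet w B a k := by
    intro k jj hk
    have h := hstep k
    unfold stepProb at h
    by_cases hBk : B k = ∅
    · simp [hBk, hk] at h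
    · by_contra hmem
      simp [hBk, hk, hmem] at h
  have hB' : ∀ k jj, a k = some jj → u jj k = 1 := by
    intro k jj hk
    have hm := hmin k jj hk
    have hjB : jj ∈ B k := (Finset.mem_filter.mp hm).1
    rw [hB k, Finset.mem_filter] at hjB
    rcases h01 jj k with h | h
    · exfalso; rw [h] at hjB; exact lt_irrefl 0 hjB.2
    · exact h
  -- realized util of agent jj's own bundle (valued by jj) is at least countBefore at any round
  have hru_nonneg : ∀ jj, (0:ℝ) ≤ realizedUtil (u i) a jj := by
    intro jj
    apply Finset.sum_nonneg
    intro k _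
    rcases h01 i k with h | h <;> split <;> simp [h]
  -- count before bound : countBefore a i k ≤ realizedUtil (u i) a i
  have hcb : ∀ k, (countBefore a i k : ℝ) ≤ realizedUtil (u i) a i := by
    intro k
    have hsub : (Finset.univ.filter fun k' : Fin m => k' < k ∧ a k' = some i)
        ⊆ Finset.univ := Finset.filter_subset _ _
    have : (countBefore a i k : ℝ)
        = ∑ k' ∈ Finset.univ.filter (fun k' : Fin m => k' < k ∧ a k' = some i),
            (if a k' = some i then u i k' else 0) := by
      rw [countBefore]
      rw [Finset.card_eq_sum_ones, Nat.cast_sum]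
      apply Finset.sum_congr rfl
      intro k' hk'
      have h2 := (Finset.mem_filter.mp hk').2.2
      rw [if_pos h2, hB' k' i h2]; norm_num
    rw [this, realizedUtil]
    apply Finset.sum_le_sum_of_subset_of_nonneg hsub
    intro k' _ _
    by_cases hk' : a k' = some i
    · rw [if_pos hk', hB' k' i hk']; norm_num
    · rw [if_neg hk']
  -- the set of rounds where j gets an item i likes
  set T := Finset.univ.filter (fun k : Fin m => a k = some j ∧ u i k = 1) with hT
  have hruj : realizedUtil (u i) a j = (T.card : ℝ) := by
    rw [realizedUtil, hT, Finset.card_eq_sum_ones, Nat.cast_sum]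
    rw [Finset.sum_filter]
    apply Finset.sum_congr rfl
    intro k _
    by_cases hk : a k = some j
    · rcases h01 i k with h | h <;> simp [hk, h]
    · simp [hk]
  by_cases hTe : T = ∅
  · rw [hruj, hTe]
    simp only [Finset.card_empty, Nat.cast_zero, zero_div]
    have := div_nonneg (hru_nonneg i) (le_of_lt (hwpos i))
    linarith
  · have hTne : T.Nonempty := Finset.nonempty_of_ne_empty hTe
    set K := T.max' hTne with hK
    have hKmem : K ∈ T := T.max'_mem hTne
    have hKa : a K = some j := (Finset.mem_filter.mp hKmem).2.1
    have hKu : u i K = 1 := (Finset.mem_filter.mp hKmem).2.2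
    have hiB : i ∈ B K := by
      rw [hB K, Finset.mem_filter]
      exact ⟨Finset.mem_univ i, by rw [hKu]; norm_num⟩
    have hjmin := hmin K j hKa
    have hle : (countBefore a j K : ℝ) / w j ≤ (countBefore a i K : ℝ) / w i :=
      (Finset.mem_filter.mp hjmin).2 i hiB
    -- T.card ≤ countBefore a j K + 1
    have hcard : (T.card : ℝ) ≤ (countBefore a j K : ℝ) + 1 := by
      have hsub : T ⊆ insert K (Finset.univ.filter
          fun k' : Fin m => k' < K ∧ a k' = some j) := by
        intro k hk
        by_cases hkK : k = K
        · rw [hkK]; exact Finset.mem_insert_self _ _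
        · apply Finset.mem_insert_of_mem
          rw [Finset.mem_filter]
          refine ⟨Finset.mem_univ _, ?_, (Finset.mem_filter.mp hk).2.1⟩
          exact lt_of_le_of_ne (T.le_max' k hk) hkK
      have h1 := Finset.card_le_card hsub
      have h2 := Finset.card_insert_le K (Finset.univ.filter
          fun k' : Fin m => k' < K ∧ a k' = some j)
      rw [countBefore]
      exact_mod_cast le_trans h1 h2
    have h1 : (T.card : ℝ) / w j ≤ ((countBefore a j K : ℝ) + 1) / w j :=
      (div_le_div_iff_of_pos_right (hwpos j)).mpr hcard
    have h2 : ((countBefore a j K : ℝ) + 1) / w j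
        = (countBefore a j K : ℝ) / w j + 1 / w j := add_div _ _ _
    have h3 : 1 / w j ≤ 1 := by
      rw [div_le_one (hwpos j)]; exact hw j
    have h4 : (countBefore a i K : ℝ) / w i ≤ realizedUtil (u i) a i / w i :=
      (div_le_div_iff_of_pos_right (hwpos i)).mpr (hcb K)
    rw [hruj]
    linarith

end
end

section
/- The Balanced LIKE mechanism is neither bounded envy-free ex-ante nor bounded envy-free ex-post with general utilities: for every real p > 2, consider 2 agents and 2 items a (arriving first) and b (arriving second), where agent 1 has utility 0 for a and p for b, and agent 2 has utility 1 for a and p − 1 for b; under truthful bidding the Balanced LIKE process deterministically allocates a to agent 2 and b to agent 1, so that u_2(A_2) = E[u_2(A_2)] = 1 while u_2(A_1) = E[u_2(A_1)] = p − 1. Hence for every constant c there exists p > 2 such that u_2(A_1) − u_2(A_2) = E[u_2(A_1)] − E[u_2(A_2)] = p − 2 > c. -/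
open Finset

attribute [local instance] Classical.propDecidable

noncomputable section

/-- **The Balanced LIKE mechanism is neither bounded envy-free ex-ante nor bounded
envy-free ex-post with general utilities.**
For every real `p > 2`, consider 2 agents and 2 items `a = I₀` (arriving first) and
`b = I₁` (arriving second), where agent `1` (index 0) has utility `0` for `a` and `p`
for `b`, and agent `2` (index 1) has utility `1` for `a` and `p − 1` for `b`.  Under
truthful bidding, the Balanced LIKE process (all weights `1`) deterministically
allocates `a` to agent 2 and `b` to agent 1 (this outcome has probability `1`), so
that `u_2(A_2) = E[u_2(A_2)] = 1` while `u_2(A_1) = E[u_2(A_1)] = p − 1`.  Hence for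
every constant `c` there exists `p > 2` with
`u_2(A_1) − u_2(A_2) = E[u_2(A_1)] − E[u_2(A_2)] = p − 2 > c`. -/
theorem balancedLike_not_boundedEnvyFree :
    (∀ p : ℝ, 2 < p →
      ∀ u : Fin 2 → Fin 2 → ℝ, u = ![![0, p], ![1, p - 1]] →
      ∀ B : Fin 2 → Finset (Fin 2),
        (∀ k, B k = Finset.univ.filter fun l => 0 < u l k) →
        outcomeProb (fun _ => (1 : ℝ)) B (![some 1, some 0] : Fin 2 → Option (Fin 2)) = 1 ∧
        realizedUtil (u 1) (![some 1, some 0] : Fin 2 → Option (Fin 2)) 1 = 1 ∧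
        realizedUtil (u 1) (![some 1, some 0] : Fin 2 → Option (Fin 2)) 0 = p - 1 ∧
        expUtil (fun _ => (1 : ℝ)) B (u 1) 1 = 1 ∧
        expUtil (fun _ => (1 : ℝ)) B (u 1) 0 = p - 1) ∧
    (∀ c : ℝ, ∃ p : ℝ, 2 < p ∧ p - 2 > c) := by
  constructor
  · intro p hp u hu B hB
    have hB0 : B 0 = {1} := by
      rw [hB 0]
      ext l
      fin_cases l <;> simp [hu]
    have hB1 : B 1 = Finset.univ := by
      rw [hB 1]
      ext l
      fin_cases l <;> simp [hu] <;> linarith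
    have cb0 : ∀ (a : Fin 2 → Option (Fin 2)) (j : Fin 2), countBefore a j 0 = 0 := by
      intro a j
      simp [countBefore, Fin.lt_def]
    have cb1 : ∀ (a : Fin 2 → Option (Fin 2)) (j : Fin 2),
        countBefore a j 1 = if a 0 = some j then 1 else 0 := by
      intro a j
      rw [countBefore, Finset.card_filter, Fin.sum_univ_two]
      simp [show (0 : Fin 2) < 1 from by decide, show ¬ (1 : Fin 2) < 1 from by decide]
    have ms0 : ∀ a : Fin 2 → Option (Fin 2), minSet (fun _ => (1 : ℝ)) B a 0 = {1} := by
      intro a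
      rw [minSet, hB0]
      ext j
      simp [cb0]
    have ms1 : ∀ a : Fin 2 → Option (Fin 2), a 0 = some 1 →
        minSet (fun _ => (1 : ℝ)) B a 1 = {0} := by
      intro a ha
      rw [minSet, hB1]
      ext j
      fin_cases j <;>
        simp [cb1, ha, Fin.forall_fin_two, show (some (0 : Fin 2) = some 1) = False from by simp]
    have step0 : stepProb (fun _ => (1 : ℝ)) B (![some 1, some 0]) 0 = 1 := by
      rw [stepProb, hB0]
      simp [ms0, hB0]
    have step1 : stepProb (fun _ => (1 : ℝ)) B (![some 1, some 0]) 1 = 1 := by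
      rw [stepProb, hB1]
      have h01 : (![some 1, some 0] : Fin 2 → Option (Fin 2)) 0 = some 1 := rfl
      simp [ms1 _ h01, hB1, show (Finset.univ : Finset (Fin 2)) ≠ ∅ from by decide]
    have hout : outcomeProb (fun _ => (1 : ℝ)) B (![some 1, some 0]) = 1 := by
      rw [outcomeProb, Fin.prod_univ_two, step0, step1]; ring
    have hru1 : realizedUtil (u 1) (![some 1, some 0] : Fin 2 → Option (Fin 2)) 1 = 1 := by
      rw [realizedUtil, Fin.sum_univ_two]
      simp [hu]
    have hru0 : realizedUtil (u 1) (![some 1, some 0] : Fin 2 → Option (Fin 2)) 0 = p - 1 := by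
      rw [realizedUtil, Fin.sum_univ_two]
      simp [hu]
    have hzero : ∀ a : Fin 2 → Option (Fin 2), a ≠ ![some 1, some 0] →
        outcomeProb (fun _ => (1 : ℝ)) B a = 0 := by
      intro a hne
      by_contra h
      rw [outcomeProb, Fin.prod_univ_two] at h
      have h0 : stepProb (fun _ => (1 : ℝ)) B a 0 ≠ 0 := fun hz => h (by rw [hz]; ring)
      have h1 : stepProb (fun _ => (1 : ℝ)) B a 1 ≠ 0 := fun hz => h (by rw [hz]; ring)
      have ha0 : a 0 = some 1 := by
        rw [stepProb, hB0] at h0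
        cases ha : a 0 with
        | none => rw [ha] at h0; simp at h0
        | some j =>
          rw [ha] at h0
          simp only [ms0, Finset.mem_singleton] at h0
          by_cases hj : j = 1
          · subst hj; rfl
          · simp [hj] at h0
      have ha1 : a 1 = some 0 := by
        rw [stepProb, hB1] at h1
        cases ha : a 1 with
        | none =>
          rw [ha] at h1
          simp [show (Finset.univ : Finset (Fin 2)) ≠ ∅ from by decide] at h1
        | some j =>
          rw [ha] at h1
          simp only [ms1 a ha0, Finset.mem_singleton] at h1
          by_cases hj : j = 0
          · subst hj; rfl
          · simp [hj] at h1
      apply hne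
      funext k
      fin_cases k
      · exact ha0
      · exact ha1
    have hexp : ∀ j : Fin 2, expUtil (fun _ => (1 : ℝ)) B (u 1) j =
        realizedUtil (u 1) (![some 1, some 0] : Fin 2 → Option (Fin 2)) j := by
      intro j
      rw [expUtil, Finset.sum_eq_single (![some 1, some 0] : Fin 2 → Option (Fin 2))]
      · rw [hout]; ring
      · intro b _ hb
        rw [hzero b hb]; ring
      · intro hmem
        exact absurd (Finset.mem_univ _) hmem
    refine ⟨hout, hru1, hru0, ?_, ?_⟩
    · rw [hexp 1, hru1]
    · rw [hexp 0, hru0]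
  · intro c
    refine ⟨max 3 (c + 3), ?_, ?_⟩
    · have := le_max_left 3 (c + 3); linarith
    · have := le_max_right 3 (c + 3); linarith


end
end
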